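/- arXiv:1807.02421 — 10 statements merged into one kernel-verified Lean document; each statement's English description precedes it below -/
import Mathlib

section
/- Let a, b > 0 and x ∈ ℝ. Define E(1-κ|x) = (∫₀¹ κ^{b-1/2}(1-κ)^a e^{-κx²/2} dκ) / (∫₀¹ κ^{b-1/2}(1-κ)^{a-1} e^{-κx²/2} dκ). Then E(1-κ|x) ≤ e^{x²/2} · a/(a + b + 1/2). -/
open Real MeasureTheory intervalIntegral

lemma rbeta_eqon (p q : ℝ) :
    Set.EqOn (fun x : ℝ => ((x : ℂ) ^ ((p : ℂ) - 1) * (1 - (x : ℂ)) ^ ((q : ℂ) - 1)))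
      (fun x : ℝ => ((x ^ (p - 1) * (1 - x) ^ (q - 1) : ℝ) : ℂ)) (Set.Icc 0 1) := by
  intro x hx
  have hx0 : (0:ℝ) ≤ x := hx.1
  have hx1 : (0:ℝ) ≤ 1 - x := by linarith [hx.2]
  simp only
  rw [show ((p:ℂ) - 1) = ((p - 1 : ℝ) : ℂ) by push_cast; ring,
    show ((q:ℂ) - 1) = ((q - 1 : ℝ) : ℂ) by push_cast; ring,
    show (1 - (x:ℂ)) = ((1 - x : ℝ) : ℂ) by push_cast; ring,
    ← Complex.ofReal_cpow hx0, ← Complex.ofReal_cpow hx1, ← Complex.ofReal_mul]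

lemma rbeta_integrable (p q : ℝ) (hp : 0 < p) (hq : 0 < q) :
    IntervalIntegrable (fun x : ℝ => x ^ (p - 1) * (1 - x) ^ (q - 1)) volume 0 1 := by
  have h := Complex.betaIntegral_convergent (u := (p:ℂ)) (v := (q:ℂ)) (by simpa) (by simpa)
  rw [intervalIntegrable_iff] at h ⊢
  rw [Set.uIoc_of_le (zero_le_one' ℝ)] at h ⊢
  have h2 : IntegrableOn (fun x : ℝ =>
      (((x : ℂ) ^ ((p : ℂ) - 1) * (1 - (x : ℂ)) ^ ((q : ℂ) - 1)).re)) (Set.Ioc 0 1) volume := h.re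
  refine h2.congr_fun (fun x hx => ?_) measurableSet_Ioc
  have := rbeta_eqon p q ⟨hx.1.le, hx.2⟩
  simp only at this
  simp [this]

lemma rbeta_val (p q : ℝ) :
    ((∫ x in (0:ℝ)..1, x ^ (p - 1) * (1 - x) ^ (q - 1) : ℝ) : ℂ)
      = Complex.betaIntegral p q := by
  rw [Complex.betaIntegral, ← intervalIntegral.integral_ofReal]
  exact (intervalIntegral.integral_congr (by simpa using rbeta_eqon p q)).symm

lemma rbeta_rec (p q : ℝ) (hp : 0 < p) (hq : 0 < q) :
    p * ∫ x in (0:ℝ)..1, x ^ (p - 1) * (1 - x) ^ q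
      = q * ∫ x in (0:ℝ)..1, x ^ p * (1 - x) ^ (q - 1) := by
  have h := Complex.betaIntegral_recurrence (u := (p:ℂ)) (v := (q:ℂ)) (by simpa) (by simpa)
  have h1 : Complex.betaIntegral p ((q:ℂ) + 1)
      = ((∫ x in (0:ℝ)..1, x ^ (p - 1) * (1 - x) ^ q : ℝ) : ℂ) := by
    rw [show ((q:ℂ) + 1) = ((q + 1 : ℝ) : ℂ) by push_cast; ring, ← rbeta_val p (q+1)]
    norm_num
  have h2 : Complex.betaIntegral ((p:ℂ) + 1) q
      = ((∫ x in (0:ℝ)..1, x ^ p * (1 - x) ^ (q - 1) : ℝ) : ℂ) := by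
    rw [show ((p:ℂ) + 1) = ((p + 1 : ℝ) : ℂ) by push_cast; ring, ← rbeta_val (p+1) q]
    norm_num
  rw [h1, h2] at h
  exact_mod_cast h

lemma rbeta_split (p q : ℝ) (hp : 0 < p) (hq : 0 < q) :
    (∫ x in (0:ℝ)..1, x ^ (p - 1) * (1 - x) ^ (q - 1))
      = (∫ x in (0:ℝ)..1, x ^ p * (1 - x) ^ (q - 1))
        + ∫ x in (0:ℝ)..1, x ^ (p - 1) * (1 - x) ^ q := by
  have hig : IntervalIntegrable (fun x : ℝ => x ^ p * (1 - x) ^ (q - 1)) volume 0 1 := by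
    have := rbeta_integrable (p + 1) q (by linarith) hq
    simpa using this
  have hih : IntervalIntegrable (fun x : ℝ => x ^ (p - 1) * (1 - x) ^ q) volume 0 1 := by
    have := rbeta_integrable p (q + 1) hp (by linarith)
    simpa using this
  rw [← intervalIntegral.integral_add hig hih]
  apply intervalIntegral.integral_congr
  intro x hx
  rw [Set.uIcc_of_le (zero_le_one' ℝ)] at hx
  have hx0 : (0:ℝ) ≤ x := hx.1
  have hx1 : (0:ℝ) ≤ 1 - x := by linarith [hx.2]
  simp only
  have e1 : x ^ p = x ^ (p - 1) * x := by
    rcases eq_or_lt_of_le hx0 with h | h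
    · rcases eq_or_ne p 1 with rfl | hp1
      · simp [← h]
      · rw [← h]
        rw [Real.zero_rpow hp.ne', Real.zero_rpow (sub_ne_zero.mpr hp1)]
        ring
    · rw [← Real.rpow_add_one h.ne']; ring_nf
  have e2 : (1 - x) ^ q = (1 - x) ^ (q - 1) * (1 - x) := by
    rcases eq_or_lt_of_le hx1 with h | h
    · rcases eq_or_ne q 1 with rfl | hq1
      · simp [← h]
      · rw [← h, Real.zero_rpow hq.ne', Real.zero_rpow (sub_ne_zero.mpr hq1)]
        ring
    · rw [← Real.rpow_add_one h.ne']; ring_nf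
  rw [e1, e2]
  ring

lemma rbeta_ratio (p q : ℝ) (hp : 0 < p) (hq : 0 < q) :
    (∫ x in (0:ℝ)..1, x ^ (p - 1) * (1 - x) ^ q)
      = q / (p + q) * ∫ x in (0:ℝ)..1, x ^ (p - 1) * (1 - x) ^ (q - 1) := by
  have hrec := rbeta_rec p q hp hq
  have hsp := rbeta_split p q hp hq
  have hpq : p + q ≠ 0 := by positivity
  field_simp
  nlinarith [hrec, hsp]

open Real MeasureTheory intervalIntegral

/-- NBP shrinkage bound: E(1-κ|x) ≤ e^{x²/2} a/(a+b+1/2). -/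
theorem stmt_0 (a b x : ℝ) (ha : 0 < a) (hb : 0 < b) :
    (∫ κ in (0:ℝ)..1, κ ^ (b - 1/2) * (1 - κ) ^ a * Real.exp (-κ * x^2 / 2)) /
      (∫ κ in (0:ℝ)..1, κ ^ (b - 1/2) * (1 - κ) ^ (a - 1) * Real.exp (-κ * x^2 / 2))
    ≤ Real.exp (x^2 / 2) * (a / (a + b + 1/2)) := by
  set p : ℝ := b + 1/2 with hp_def
  have hp : 0 < p := by positivity
  have hbp : b - 1/2 = p - 1 := by ring
  rw [hbp]
  have hcont : Continuous fun κ : ℝ => Real.exp (-κ * x^2 / 2) := by fun_prop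
  -- integrability facts
  have hJ0int : IntervalIntegrable (fun κ : ℝ => κ ^ (p - 1) * (1 - κ) ^ (a - 1)) volume 0 1 :=
    rbeta_integrable p a hp ha
  have hJ1int : IntervalIntegrable (fun κ : ℝ => κ ^ (p - 1) * (1 - κ) ^ a) volume 0 1 := by
    have := rbeta_integrable p (a + 1) hp (by linarith)
    simpa using this
  have hI1int : IntervalIntegrable
      (fun κ : ℝ => κ ^ (p - 1) * (1 - κ) ^ a * Real.exp (-κ * x^2 / 2)) volume 0 1 :=
    hJ1int.mul_continuousOn hcont.continuousOn
  have hI0int : IntervalIntegrable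
      (fun κ : ℝ => κ ^ (p - 1) * (1 - κ) ^ (a - 1) * Real.exp (-κ * x^2 / 2)) volume 0 1 :=
    hJ0int.mul_continuousOn hcont.continuousOn
  set J0 := ∫ κ in (0:ℝ)..1, κ ^ (p - 1) * (1 - κ) ^ (a - 1) with hJ0_def
  set J1 := ∫ κ in (0:ℝ)..1, κ ^ (p - 1) * (1 - κ) ^ a with hJ1_def
  set I1 := ∫ κ in (0:ℝ)..1, κ ^ (p - 1) * (1 - κ) ^ a * Real.exp (-κ * x^2 / 2) with hI1_def
  set I0 := ∫ κ in (0:ℝ)..1, κ ^ (p - 1) * (1 - κ) ^ (a - 1) * Real.exp (-κ * x^2 / 2)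
    with hI0_def
  have hJ0pos : 0 < J0 := by
    refine intervalIntegral_pos_of_pos_on hJ0int (fun t ht => ?_) zero_lt_one
    have h1 : 0 < t := ht.1
    have h2 : 0 < 1 - t := by linarith [ht.2]
    positivity
  have hJ1eq : J1 = a / (a + b + 1/2) * J0 := by
    have := rbeta_ratio p a hp ha
    rw [hJ0_def, hJ1_def, this]
    rw [hp_def]
    ring_nf
  -- I1 ≤ J1
  have hI1le : I1 ≤ J1 := by
    refine intervalIntegral.integral_mono_on zero_le_one hI1int hJ1int (fun t ht => ?_)
    have h1 : (0:ℝ) ≤ t := ht.1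
    have h2 : (0:ℝ) ≤ 1 - t := by linarith [ht.2]
    refine mul_le_of_le_one_right (by positivity) (Real.exp_le_one_iff.mpr ?_)
    nlinarith [sq_nonneg x]
  -- exp(-x²/2) * J0 ≤ I0
  have hI0ge : Real.exp (-(x^2/2)) * J0 ≤ I0 := by
    rw [hJ0_def, ← intervalIntegral.integral_const_mul]
    refine intervalIntegral.integral_mono_on zero_le_one (hJ0int.const_mul _) hI0int
      (fun t ht => ?_)
    have h1 : (0:ℝ) ≤ t := ht.1
    have h2 : (0:ℝ) ≤ 1 - t := by linarith [ht.2]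
    rw [mul_comm]
    refine mul_le_mul_of_nonneg_left (Real.exp_le_exp.mpr ?_) (by positivity)
    nlinarith [sq_nonneg x, ht.2]
  have hJ1nonneg : 0 ≤ J1 := by
    rw [hJ1eq]; positivity
  have hd : 0 < Real.exp (-(x^2/2)) * J0 := by positivity
  calc I1 / I0 ≤ J1 / (Real.exp (-(x^2/2)) * J0) := div_le_div₀ hJ1nonneg hI1le hd hI0ge
    _ = Real.exp (x^2/2) * (a / (a + b + 1/2)) := by
        rw [hJ1eq, Real.exp_neg]
        field_simp
end

section
/- Let a ∈ (0,1), b ∈ (1/2,∞), ε ∈ (0,1), and x ∈ ℝ. Define Pr(κ < ε | x) = (∫₀^ε κ^{b-1/2}(1-κ)^{a-1} e^{-κx²/2} dκ) / (∫₀¹ κ^{b-1/2}(1-κ)^{a-1} e^{-κx²/2} dκ). Then Pr(κ < ε | x) ≤ e^{x²/2} · aε / ((b + 1/2)(1 - ε)). -/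
open Real MeasureTheory intervalIntegral

/-- NBP posterior concentration: Pr(κ < ε | x) ≤ e^{x²/2} aε/((b+1/2)(1-ε)). -/
theorem stmt_1 (a b ε x : ℝ) (ha : a ∈ Set.Ioo (0:ℝ) 1) (hb : b ∈ Set.Ioi (1/2 : ℝ))
    (hε : ε ∈ Set.Ioo (0:ℝ) 1) :
    (∫ κ in (0:ℝ)..ε, κ ^ (b - 1/2) * (1 - κ) ^ (a - 1) * Real.exp (-κ * x^2 / 2)) /
      (∫ κ in (0:ℝ)..1, κ ^ (b - 1/2) * (1 - κ) ^ (a - 1) * Real.exp (-κ * x^2 / 2))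
    ≤ Real.exp (x^2 / 2) * (a * ε / ((b + 1/2) * (1 - ε))) := by
  obtain ⟨ha0, ha1⟩ := ha
  obtain ⟨hε0, hε1⟩ := hε
  rw [Set.mem_Ioi] at hb
  set f : ℝ → ℝ := fun κ => κ ^ (b - 1/2) * (1 - κ) ^ (a - 1) * Real.exp (-κ * x^2 / 2)
    with hfdef
  have hb0 : (0:ℝ) < b - 1/2 := by linarith
  have h1ε : (0:ℝ) < 1 - ε := by linarith
  -- dominating function integrable
  have hg : IntervalIntegrable (fun κ : ℝ => (1 - κ) ^ (a - 1)) volume 0 1 := by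
    have := (intervalIntegrable_rpow' (a := 0) (b := 1) (r := a - 1) (by linarith)).comp_sub_left 1
    simpa using this.symm
  have hmeas : Measurable f := by
    fun_prop
  have hfnonneg : ∀ κ ∈ Set.Icc (0:ℝ) 1, 0 ≤ f κ := by
    intro κ hκ
    have h1 : 0 ≤ κ := hκ.1
    have h2 : (0:ℝ) ≤ 1 - κ := by linarith [hκ.2]
    positivity
  -- f integrable on [0,1]
  have hf_int : IntervalIntegrable f volume 0 1 := by
    apply hg.mono_fun' hmeas.aestronglyMeasurable
    rw [Set.uIoc_of_le zero_le_one]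
    filter_upwards [ae_restrict_mem measurableSet_Ioc] with κ hκ
    have h1 : (0:ℝ) < κ := hκ.1
    have h2 : (0:ℝ) ≤ 1 - κ := by linarith [hκ.2]
    have hfk : 0 ≤ f κ := hfnonneg κ ⟨h1.le, hκ.2⟩
    simp only [Real.norm_eq_abs, abs_of_nonneg hfk]
    have e1 : κ ^ (b - 1/2) ≤ 1 := Real.rpow_le_one h1.le hκ.2 hb0.le
    have e2 : Real.exp (-κ * x^2 / 2) ≤ 1 := by
      rw [Real.exp_le_one_iff]
      nlinarith [sq_nonneg x]
    have e3 : (0:ℝ) ≤ (1 - κ) ^ (a - 1) := Real.rpow_nonneg h2 _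
    calc f κ = κ ^ (b - 1/2) * (1 - κ) ^ (a - 1) * Real.exp (-κ * x^2 / 2) := rfl
      _ ≤ 1 * (1 - κ) ^ (a - 1) * 1 := by
          apply mul_le_mul (mul_le_mul e1 le_rfl e3 zero_le_one) e2 (Real.exp_nonneg _)
          positivity
      _ = (1 - κ) ^ (a - 1) := by ring
  have hsub1 : Set.uIcc (0:ℝ) ε ⊆ Set.uIcc (0:ℝ) 1 := by
    rw [Set.uIcc_of_le hε0.le, Set.uIcc_of_le zero_le_one]
    exact Set.Icc_subset_Icc le_rfl hε1.le
  have hsub2 : Set.uIcc ε (1:ℝ) ⊆ Set.uIcc (0:ℝ) 1 := by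
    rw [Set.uIcc_of_le hε1.le, Set.uIcc_of_le zero_le_one]
    exact Set.Icc_subset_Icc hε0.le le_rfl
  -- numerator bound
  have hrpow_int : IntervalIntegrable (fun κ : ℝ => (1 - ε) ^ (a-1) * κ ^ (b - 1/2)) volume 0 ε :=
    (intervalIntegrable_rpow' (by linarith)).const_mul _
  have key1 : (∫ κ in (0:ℝ)..ε, f κ) ≤ (1 - ε) ^ (a - 1) * (ε ^ (b + 1/2) / (b + 1/2)) := by
    have h1 : (∫ κ in (0:ℝ)..ε, f κ) ≤ ∫ κ in (0:ℝ)..ε, (1 - ε) ^ (a-1) * κ ^ (b - 1/2) := by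
      apply intervalIntegral.integral_mono_on hε0.le (hf_int.mono_set hsub1) hrpow_int
      intro κ hκ
      have h2 : (0:ℝ) < 1 - κ := by linarith [hκ.2]
      have e1 : (1 - κ) ^ (a - 1) ≤ (1 - ε) ^ (a - 1) :=
        Real.rpow_le_rpow_of_nonpos h1ε (by linarith [hκ.2]) (by linarith)
      have e2 : Real.exp (-κ * x^2 / 2) ≤ 1 := by
        rw [Real.exp_le_one_iff]; nlinarith [sq_nonneg x, hκ.1]
      have e3 : (0:ℝ) ≤ κ ^ (b - 1/2) := Real.rpow_nonneg hκ.1 _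
      calc f κ = κ ^ (b - 1/2) * ((1 - κ) ^ (a - 1) * Real.exp (-κ * x^2 / 2)) := by
            simp [hfdef]; ring
        _ ≤ κ ^ (b - 1/2) * ((1 - ε) ^ (a - 1) * 1) := by
            apply mul_le_mul_of_nonneg_left _ e3
            exact mul_le_mul e1 e2 (Real.exp_nonneg _) (Real.rpow_nonneg h1ε.le _)
        _ = (1 - ε) ^ (a-1) * κ ^ (b - 1/2) := by ring
    have h2 : (∫ κ in (0:ℝ)..ε, (1 - ε) ^ (a-1) * κ ^ (b - 1/2))
        = (1 - ε) ^ (a - 1) * (ε ^ (b + 1/2) / (b + 1/2)) := by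
      rw [intervalIntegral.integral_const_mul, integral_rpow (Or.inl (by linarith))]
      rw [Real.zero_rpow (by linarith : b - 1/2 + 1 ≠ 0)]
      ring_nf
    linarith
  -- denominator bound
  have hεint : ∫ κ in ε..(1:ℝ), (1 - κ) ^ (a - 1) = (1 - ε) ^ a / a := by
    have := intervalIntegral.integral_comp_sub_left (a := ε) (b := 1)
      (fun u : ℝ => u ^ (a - 1)) 1
    rw [this, sub_self, integral_rpow (Or.inl (by linarith)),
      Real.zero_rpow (by linarith : a - 1 + 1 ≠ 0), sub_add_cancel]
    ring_nf
  have hh_int : IntervalIntegrable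
      (fun κ : ℝ => Real.exp (-(x^2/2)) * ε ^ (b - 1/2) * (1 - κ) ^ (a - 1)) volume ε 1 :=
    (hg.mono_set hsub2).const_mul _
  have key2a : Real.exp (-(x^2/2)) * ε ^ (b - 1/2) * ((1 - ε) ^ a / a)
      ≤ ∫ κ in ε..(1:ℝ), f κ := by
    have h1 : (∫ κ in ε..(1:ℝ), Real.exp (-(x^2/2)) * ε ^ (b - 1/2) * (1 - κ) ^ (a - 1))
        ≤ ∫ κ in ε..(1:ℝ), f κ := by
      apply intervalIntegral.integral_mono_on hε1.le hh_int (hf_int.mono_set hsub2)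
      intro κ hκ
      have h2 : (0:ℝ) ≤ 1 - κ := by linarith [hκ.2]
      have hκ0 : (0:ℝ) < κ := lt_of_lt_of_le hε0 hκ.1
      have e1 : ε ^ (b - 1/2) ≤ κ ^ (b - 1/2) := Real.rpow_le_rpow hε0.le hκ.1 hb0.le
      have e2 : Real.exp (-(x^2/2)) ≤ Real.exp (-κ * x^2 / 2) := by
        apply Real.exp_le_exp.2
        nlinarith [sq_nonneg x, hκ.2]
      have e3 : (0:ℝ) ≤ (1 - κ) ^ (a - 1) := Real.rpow_nonneg h2 _
      calc Real.exp (-(x^2/2)) * ε ^ (b - 1/2) * (1 - κ) ^ (a - 1)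
          = ε ^ (b - 1/2) * (1 - κ) ^ (a - 1) * Real.exp (-(x^2/2)) := by ring
        _ ≤ κ ^ (b - 1/2) * (1 - κ) ^ (a - 1) * Real.exp (-κ * x^2 / 2) := by
            apply mul_le_mul (mul_le_mul_of_nonneg_right e1 e3) e2 (Real.exp_nonneg _)
            positivity
        _ = f κ := rfl
    rw [intervalIntegral.integral_const_mul, hεint] at h1
    exact h1
  have key2 : Real.exp (-(x^2/2)) * ε ^ (b - 1/2) * ((1 - ε) ^ a / a)
      ≤ ∫ κ in (0:ℝ)..1, f κ := by
    have hsplit : (∫ κ in (0:ℝ)..ε, f κ) + (∫ κ in ε..(1:ℝ), f κ) = ∫ κ in (0:ℝ)..1, f κ :=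
      intervalIntegral.integral_add_adjacent_intervals (hf_int.mono_set hsub1)
        (hf_int.mono_set hsub2)
    have hnn : 0 ≤ ∫ κ in (0:ℝ)..ε, f κ := by
      apply intervalIntegral.integral_nonneg hε0.le
      intro κ hκ
      exact hfnonneg κ ⟨hκ.1, le_trans hκ.2 hε1.le⟩
    linarith
  -- put together
  have hD'pos : 0 < Real.exp (-(x^2/2)) * ε ^ (b - 1/2) * ((1 - ε) ^ a / a) := by
    have := Real.rpow_pos_of_pos hε0 (b - 1/2)
    have := Real.rpow_pos_of_pos h1ε a
    positivity
  have hN'nonneg : 0 ≤ (1 - ε) ^ (a - 1) * (ε ^ (b + 1/2) / (b + 1/2)) := by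
    have := Real.rpow_pos_of_pos hε0 (b + 1/2)
    have := Real.rpow_pos_of_pos h1ε (a - 1)
    positivity
  have hmain : (∫ κ in (0:ℝ)..ε, f κ) / (∫ κ in (0:ℝ)..1, f κ)
      ≤ ((1 - ε) ^ (a - 1) * (ε ^ (b + 1/2) / (b + 1/2))) /
        (Real.exp (-(x^2/2)) * ε ^ (b - 1/2) * ((1 - ε) ^ a / a)) :=
    div_le_div₀ hN'nonneg key1 hD'pos key2
  have halg : ((1 - ε) ^ (a - 1) * (ε ^ (b + 1/2) / (b + 1/2))) /
        (Real.exp (-(x^2/2)) * ε ^ (b - 1/2) * ((1 - ε) ^ a / a))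
      = Real.exp (x^2 / 2) * (a * ε / ((b + 1/2) * (1 - ε))) := by
    have e1 : ε ^ (b + 1/2) = ε ^ (b - 1/2) * ε := by
      rw [show b + 1/2 = (b - 1/2) + 1 by ring, Real.rpow_add_one hε0.ne']
    have e2 : (1 - ε) ^ a = (1 - ε) ^ (a - 1) * (1 - ε) := by
      nth_rewrite 1 [show a = (a - 1) + 1 by ring]
      rw [Real.rpow_add_one h1ε.ne']
    have e3 : Real.exp (-(x^2/2)) = (Real.exp (x^2/2))⁻¹ := Real.exp_neg _
    have p1 : (0:ℝ) < ε ^ (b - 1/2) := Real.rpow_pos_of_pos hε0 _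
    have p2 : (0:ℝ) < (1 - ε) ^ (a - 1) := Real.rpow_pos_of_pos h1ε _
    have p3 : (0:ℝ) < Real.exp (x^2/2) := Real.exp_pos _
    have p4 : (0:ℝ) < b + 1/2 := by linarith
    rw [e1, e2, e3]
    field_simp
  exact hmain.trans (le_of_eq halg)
end

section
/- Let a ∈ (0,1), b ∈ (1/2,∞), η ∈ (0,1), δ ∈ (0,1), and x ∈ ℝ. Define Pr(κ > η | x) = (∫_η¹ κ^{b-1/2}(1-κ)^{a-1} e^{-κx²/2} dκ) / (∫₀¹ κ^{b-1/2}(1-κ)^{a-1} e^{-κx²/2} dκ). Then Pr(κ > η | x) ≤ ((b + 1/2)(1-η)^a / (a (ηδ)^{b+1/2})) · exp(-η(1-δ)x²/2). -/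
open Real intervalIntegral MeasureTheory

/-- NBP posterior tail bound: Pr(κ > η | x) ≤ ((b+1/2)(1-η)^a/(a(ηδ)^{b+1/2})) e^{-η(1-δ)x²/2}. -/
theorem stmt_2 (a b η δ x : ℝ) (ha : a ∈ Set.Ioo (0:ℝ) 1) (hb : b ∈ Set.Ioi (1/2 : ℝ))
    (hη : η ∈ Set.Ioo (0:ℝ) 1) (hδ : δ ∈ Set.Ioo (0:ℝ) 1) :
    (∫ κ in η..1, κ ^ (b - 1/2) * (1 - κ) ^ (a - 1) * Real.exp (-κ * x^2 / 2)) /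
      (∫ κ in (0:ℝ)..1, κ ^ (b - 1/2) * (1 - κ) ^ (a - 1) * Real.exp (-κ * x^2 / 2))
    ≤ ((b + 1/2) * (1 - η) ^ a / (a * (η * δ) ^ (b + 1/2))) *
        Real.exp (-η * (1 - δ) * x^2 / 2) := by
  obtain ⟨ha0, ha1⟩ := ha
  obtain ⟨hη0, hη1⟩ := hη
  obtain ⟨hδ0, hδ1⟩ := hδ
  have hb' : (1/2:ℝ) < b := hb
  have hb0 : (0:ℝ) < b - 1/2 := by linarith
  have hbp : (0:ℝ) < b + 1/2 := by linarith
  have hm : 0 < η * δ := mul_pos hη0 hδ0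
  have hmη : η * δ < η := by nlinarith
  have hm1 : η * δ < 1 := hmη.trans hη1
  set f : ℝ → ℝ := fun κ => κ ^ (b - 1/2) * (1 - κ) ^ (a - 1) * Real.exp (-κ * x^2 / 2)
    with hfdef
  -- integrability of (1-κ)^(a-1)
  have hIntb : ∀ c d : ℝ, IntervalIntegrable (fun κ : ℝ => (1 - κ) ^ (a - 1)) volume c d := by
    intro c d
    have := (intervalIntegrable_rpow' (show (-1:ℝ) < a - 1 by linarith)
      (a := 1 - c) (b := 1 - d)).comp_sub_left 1
    simpa using this
  have hcg : Continuous (fun κ : ℝ => κ ^ (b - 1/2) * Real.exp (-κ * x^2 / 2)) :=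
    (Real.continuous_rpow_const hb0.le).mul (Real.continuous_exp.comp (by continuity))
  have hIntf : ∀ c d : ℝ, IntervalIntegrable f volume c d := by
    intro c d
    have h1 : IntervalIntegrable
        (fun κ : ℝ => (κ ^ (b - 1/2) * Real.exp (-κ * x^2 / 2)) * (1 - κ) ^ (a - 1))
        volume c d := (hIntb c d).continuousOn_mul hcg.continuousOn
    have hfe : f = fun κ : ℝ =>
        (κ ^ (b - 1/2) * Real.exp (-κ * x^2 / 2)) * (1 - κ) ^ (a - 1) := by
      funext κ; simp only [hfdef]; ring
    rw [hfe]; exact h1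
  -- numerator bound
  have hNpt : ∀ κ ∈ Set.Icc η 1, f κ ≤ (1 - κ) ^ (a - 1) * Real.exp (-η * x^2 / 2) := by
    intro κ hκ
    have hκ0 : 0 ≤ κ := le_trans hη0.le hκ.1
    have h1 : κ ^ (b - 1/2) ≤ 1 := Real.rpow_le_one hκ0 hκ.2 hb0.le
    have h2 : Real.exp (-κ * x^2 / 2) ≤ Real.exp (-η * x^2 / 2) := by
      apply Real.exp_le_exp.2
      nlinarith [sq_nonneg x, hκ.1]
    have h3 : (0:ℝ) ≤ (1 - κ) ^ (a - 1) := Real.rpow_nonneg (by linarith [hκ.2]) _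
    calc f κ ≤ 1 * (1 - κ) ^ (a - 1) * Real.exp (-κ * x^2 / 2) := by
          simp only [hfdef]
          apply mul_le_mul_of_nonneg_right _ (Real.exp_pos _).le
          exact mul_le_mul_of_nonneg_right h1 h3
      _ = (1 - κ) ^ (a - 1) * Real.exp (-κ * x^2 / 2) := by ring
      _ ≤ (1 - κ) ^ (a - 1) * Real.exp (-η * x^2 / 2) := mul_le_mul_of_nonneg_left h2 h3
  have hNint : ∫ κ in η..1, (1 - κ) ^ (a - 1) = (1 - η) ^ a / a := by
    have h := integral_comp_sub_left (a := η) (b := 1) (fun u : ℝ => u ^ (a - 1)) 1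
    simp only [sub_self] at h
    rw [h, integral_rpow (Or.inl (by linarith : (-1:ℝ) < a - 1))]
    rw [Real.zero_rpow (by linarith : a - 1 + 1 ≠ 0)]
    rw [show a - 1 + 1 = a by ring]
    ring
  have hN : (∫ κ in η..1, f κ) ≤ (1 - η) ^ a / a * Real.exp (-η * x^2 / 2) := by
    calc (∫ κ in η..1, f κ)
        ≤ ∫ κ in η..1, (1 - κ) ^ (a - 1) * Real.exp (-η * x^2 / 2) :=
          integral_mono_on hη1.le (hIntf η 1) ((hIntb η 1).mul_const _) hNpt
      _ = (∫ κ in η..1, (1 - κ) ^ (a - 1)) * Real.exp (-η * x^2 / 2) :=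
          integral_mul_const _ _
      _ = (1 - η) ^ a / a * Real.exp (-η * x^2 / 2) := by rw [hNint]
  -- denominator lower bound
  have hDpt : ∀ κ ∈ Set.Icc (0:ℝ) (η * δ),
      κ ^ (b - 1/2) * Real.exp (-(η * δ) * x^2 / 2) ≤ f κ := by
    intro κ hκ
    have hκ1 : 1 - κ ≤ 1 := by linarith [hκ.1]
    have hκ1' : 0 < 1 - κ := by linarith [hκ.2, hm1]
    have h1 : (1:ℝ) ≤ (1 - κ) ^ (a - 1) :=
      Real.one_le_rpow_of_pos_of_le_one_of_nonpos hκ1' hκ1 (by linarith)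
    have h2 : Real.exp (-(η * δ) * x^2 / 2) ≤ Real.exp (-κ * x^2 / 2) := by
      apply Real.exp_le_exp.2
      nlinarith [sq_nonneg x, hκ.2]
    have h3 : (0:ℝ) ≤ κ ^ (b - 1/2) := Real.rpow_nonneg hκ.1 _
    have h4 : Real.exp (-(η * δ) * x^2 / 2) ≤ (1 - κ) ^ (a - 1) * Real.exp (-κ * x^2 / 2) := by
      calc Real.exp (-(η * δ) * x^2 / 2) ≤ Real.exp (-κ * x^2 / 2) := h2
        _ = 1 * Real.exp (-κ * x^2 / 2) := (one_mul _).symm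
        _ ≤ (1 - κ) ^ (a - 1) * Real.exp (-κ * x^2 / 2) :=
            mul_le_mul_of_nonneg_right h1 (Real.exp_pos _).le
    calc κ ^ (b - 1/2) * Real.exp (-(η * δ) * x^2 / 2)
        ≤ κ ^ (b - 1/2) * ((1 - κ) ^ (a - 1) * Real.exp (-κ * x^2 / 2)) :=
          mul_le_mul_of_nonneg_left h4 h3
      _ = f κ := by simp only [hfdef]; ring
  have hDint : ∫ κ in (0:ℝ)..(η * δ), κ ^ (b - 1/2) = (η * δ) ^ (b + 1/2) / (b + 1/2) := by
    rw [integral_rpow (Or.inl (by linarith : (-1:ℝ) < b - 1/2))]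
    rw [Real.zero_rpow (by linarith : b - 1/2 + 1 ≠ 0)]
    rw [show b - 1/2 + 1 = b + 1/2 by ring]
    ring
  have hD1 : (η * δ) ^ (b + 1/2) / (b + 1/2) * Real.exp (-(η * δ) * x^2 / 2)
      ≤ ∫ κ in (0:ℝ)..(η * δ), f κ := by
    calc (η * δ) ^ (b + 1/2) / (b + 1/2) * Real.exp (-(η * δ) * x^2 / 2)
        = (∫ κ in (0:ℝ)..(η * δ), κ ^ (b - 1/2)) * Real.exp (-(η * δ) * x^2 / 2) := by
          rw [hDint]
      _ = ∫ κ in (0:ℝ)..(η * δ), κ ^ (b - 1/2) * Real.exp (-(η * δ) * x^2 / 2) :=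
          (intervalIntegral.integral_mul_const _ _).symm
      _ ≤ ∫ κ in (0:ℝ)..(η * δ), f κ :=
          integral_mono_on hm.le
            ((intervalIntegrable_rpow' (by linarith)).mul_const _) (hIntf 0 (η * δ)) hDpt
  have hD2 : (0:ℝ) ≤ ∫ κ in (η * δ)..1, f κ := by
    apply integral_nonneg hm1.le
    intro κ hκ
    have hκ0 : 0 ≤ κ := le_trans hm.le hκ.1
    exact mul_nonneg (mul_nonneg (Real.rpow_nonneg hκ0 _)
      (Real.rpow_nonneg (by nlinarith [hκ.2] : (0:ℝ) ≤ 1 - κ) _)) (Real.exp_pos _).le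
  have hDsplit : (∫ κ in (0:ℝ)..1, f κ)
      = (∫ κ in (0:ℝ)..(η * δ), f κ) + ∫ κ in (η * δ)..1, f κ :=
    (integral_add_adjacent_intervals (hIntf 0 (η * δ)) (hIntf (η * δ) 1)).symm
  set Dlow : ℝ := (η * δ) ^ (b + 1/2) / (b + 1/2) * Real.exp (-(η * δ) * x^2 / 2) with hDlow
  have hDlowpos : 0 < Dlow :=
    mul_pos (div_pos (Real.rpow_pos_of_pos hm _) hbp) (Real.exp_pos _)
  have hD : Dlow ≤ ∫ κ in (0:ℝ)..1, f κ := by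
    rw [hDsplit]; linarith
  have hNup : (0:ℝ) ≤ (1 - η) ^ a / a * Real.exp (-η * x^2 / 2) :=
    mul_nonneg (div_nonneg (Real.rpow_nonneg (by linarith) _) ha0.le) (Real.exp_pos _).le
  have main : (∫ κ in η..1, f κ) / (∫ κ in (0:ℝ)..1, f κ)
      ≤ ((1 - η) ^ a / a * Real.exp (-η * x^2 / 2)) / Dlow :=
    div_le_div₀ hNup hN hDlowpos hD
  have heq : ((1 - η) ^ a / a * Real.exp (-η * x^2 / 2)) / Dlow
      = ((b + 1/2) * (1 - η) ^ a / (a * (η * δ) ^ (b + 1/2))) *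
        Real.exp (-η * (1 - δ) * x^2 / 2) := by
    rw [show (-η * (1 - δ) * x^2 / 2) = (-η * x^2 / 2) - (-(η * δ) * x^2 / 2) by ring,
      Real.exp_sub, hDlow]
    have h1 : (η * δ) ^ (b + 1/2) ≠ 0 := (Real.rpow_pos_of_pos hm _).ne'
    have h2 : Real.exp (-(η * δ) * x^2 / 2) ≠ 0 := (Real.exp_pos _).ne'
    field_simp
  calc (∫ κ in η..1, f κ) / (∫ κ in (0:ℝ)..1, f κ)
      ≤ ((1 - η) ^ a / a * Real.exp (-η * x^2 / 2)) / Dlow := main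
    _ = _ := heq
end

section
/- Let b > 1/2 be fixed, and let (aₙ) be a sequence with aₙ ∈ (0,1) and aₙ → 0. Then for every fixed x ∈ ℝ, the posterior shrinkage expectation E(1-κ|x; aₙ, b) = (∫₀¹ κ^{b-1/2}(1-κ)^{aₙ} e^{-κx²/2} dκ)/(∫₀¹ κ^{b-1/2}(1-κ)^{aₙ-1} e^{-κx²/2} dκ) converges to 0 as n → ∞. -/
open Real Filter intervalIntegral

/-- Integrability of the integrand for exponent `t > -1`. -/
lemma nbp_integrable (e t : ℝ) (he : 0 ≤ e) (ht : -1 < t) (x : ℝ) :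
    IntervalIntegrable (fun κ => κ ^ e * (1 - κ) ^ t * Real.exp (-κ * x^2 / 2))
      MeasureTheory.volume 0 1 := by
  have h1 : IntervalIntegrable (fun u : ℝ => u ^ t) MeasureTheory.volume 0 1 :=
    intervalIntegrable_rpow' ht
  have h2 : IntervalIntegrable (fun κ : ℝ => (1 - κ) ^ t) MeasureTheory.volume 0 1 := by
    simpa using (h1.comp_sub_left 1).symm
  have hc1 : ContinuousOn (fun κ : ℝ => κ ^ e) (Set.uIcc 0 1) :=
    (Real.continuous_rpow_const he).continuousOn
  have hc2 : ContinuousOn (fun κ : ℝ => Real.exp (-κ * x^2 / 2)) (Set.uIcc 0 1) :=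
    (Real.continuous_exp.comp (by continuity)).continuousOn
  exact (h2.continuousOn_mul hc1).mul_continuousOn hc2

/-- If aₙ → 0 then the posterior shrinkage expectation E(1-κ|x; aₙ, b) → 0 for fixed x. -/
theorem stmt_3 (b : ℝ) (hb : 1/2 < b) (a : ℕ → ℝ) (ha : ∀ n, a n ∈ Set.Ioo (0:ℝ) 1)
    (ha0 : Tendsto a atTop (nhds 0)) (x : ℝ) :
    Tendsto (fun n =>
      (∫ κ in (0:ℝ)..1, κ ^ (b - 1/2) * (1 - κ) ^ (a n) * Real.exp (-κ * x^2 / 2)) /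
        (∫ κ in (0:ℝ)..1, κ ^ (b - 1/2) * (1 - κ) ^ (a n - 1) * Real.exp (-κ * x^2 / 2)))
      atTop (nhds 0) := by
  have hq : 0 < b - 1/2 := by linarith
  set q := b - 1/2 with hqdef
  set c : ℝ := (1/2 : ℝ) ^ q * Real.exp (-x^2 / 2) with hc
  have hc0 : 0 < c := by positivity
  set N : ℕ → ℝ := fun n =>
    ∫ κ in (0:ℝ)..1, κ ^ q * (1 - κ) ^ (a n) * Real.exp (-κ * x^2 / 2) with hN
  set D : ℕ → ℝ := fun n =>
    ∫ κ in (0:ℝ)..1, κ ^ q * (1 - κ) ^ (a n - 1) * Real.exp (-κ * x^2 / 2) with hD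
  -- integrability
  have hIN : ∀ n, IntervalIntegrable
      (fun κ => κ ^ q * (1 - κ) ^ (a n) * Real.exp (-κ * x^2 / 2))
      MeasureTheory.volume 0 1 := fun n =>
    nbp_integrable q (a n) hq.le (by linarith [(ha n).1]) x
  have hID : ∀ n, IntervalIntegrable
      (fun κ => κ ^ q * (1 - κ) ^ (a n - 1) * Real.exp (-κ * x^2 / 2))
      MeasureTheory.volume 0 1 := fun n =>
    nbp_integrable q (a n - 1) hq.le (by linarith [(ha n).1]) x
  -- numerator bounds
  have hN0 : ∀ n, 0 ≤ N n := by
    intro n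
    apply intervalIntegral.integral_nonneg (by norm_num)
    intro u hu
    have h0 : (0:ℝ) ≤ u := hu.1
    have h1 : (0:ℝ) ≤ 1 - u := by linarith [hu.2]
    exact mul_nonneg (mul_nonneg (Real.rpow_nonneg h0 _) (Real.rpow_nonneg h1 _))
      (Real.exp_pos _).le
  have hN1 : ∀ n, N n ≤ 1 := by
    intro n
    have := intervalIntegral.integral_mono_on (μ := MeasureTheory.volume)
      (a := (0:ℝ)) (b := 1) (by norm_num) (hIN n)
      (_root_.intervalIntegrable_const (c := (1:ℝ)))
      (fun u hu => by
        have h0 : (0:ℝ) ≤ u := hu.1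
        have h1 : u ≤ 1 := hu.2
        have e1 : u ^ q ≤ 1 := Real.rpow_le_one h0 h1 hq.le
        have e2 : (1 - u) ^ (a n) ≤ 1 :=
          Real.rpow_le_one (by linarith) (by linarith) (ha n).1.le
        have e3 : Real.exp (-u * x^2 / 2) ≤ 1 := by
          apply Real.exp_le_one_iff.mpr
          nlinarith [sq_nonneg x]
        have w1 : (0:ℝ) ≤ (1 - u) ^ (a n) := Real.rpow_nonneg (by linarith) _
        have w2 : (0:ℝ) ≤ u ^ q := Real.rpow_nonneg h0 _
        calc u ^ q * (1 - u) ^ (a n) * Real.exp (-u * x^2 / 2)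
            ≤ 1 * 1 * 1 := by
              apply mul_le_mul (mul_le_mul e1 e2 w1 zero_le_one) e3 (Real.exp_pos _).le
              norm_num
          _ = 1 := by norm_num)
    calc N n ≤ ∫ _ in (0:ℝ)..1, (1:ℝ) := this
      _ = 1 := by simp
  -- denominator lower bound
  have hDlb : ∀ n, c / (2 * a n) ≤ D n := by
    intro n
    obtain ⟨han0, han1⟩ := ha n
    have hIDL : IntervalIntegrable
        (fun κ => κ ^ q * (1 - κ) ^ (a n - 1) * Real.exp (-κ * x^2 / 2))
        MeasureTheory.volume 0 (1/2) :=
      (hID n).mono_set (by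
        apply Set.uIcc_subset_uIcc <;>
          · rw [Set.uIcc_of_le (by norm_num : (0:ℝ) ≤ 1), Set.mem_Icc]
            norm_num)
    have hIDR : IntervalIntegrable
        (fun κ => κ ^ q * (1 - κ) ^ (a n - 1) * Real.exp (-κ * x^2 / 2))
        MeasureTheory.volume (1/2) 1 :=
      (hID n).mono_set (by
        apply Set.uIcc_subset_uIcc <;>
          · rw [Set.uIcc_of_le (by norm_num : (0:ℝ) ≤ 1), Set.mem_Icc]
            norm_num)
    have hsplit : D n =
        (∫ κ in (0:ℝ)..(1/2), κ ^ q * (1 - κ) ^ (a n - 1) * Real.exp (-κ * x^2 / 2))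
        + ∫ κ in (1/2 : ℝ)..1, κ ^ q * (1 - κ) ^ (a n - 1) * Real.exp (-κ * x^2 / 2) :=
      (intervalIntegral.integral_add_adjacent_intervals hIDL hIDR).symm
    have hL0 : 0 ≤ ∫ κ in (0:ℝ)..(1/2), κ ^ q * (1 - κ) ^ (a n - 1)
        * Real.exp (-κ * x^2 / 2) := by
      apply intervalIntegral.integral_nonneg (by norm_num)
      intro u hu
      have h0 : (0:ℝ) ≤ u := hu.1
      have h1 : u ≤ 1/2 := hu.2
      have : (0:ℝ) ≤ 1 - u := by linarith
      positivity
    -- integrability of the comparison function on [1/2, 1]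
    have hIg : IntervalIntegrable (fun κ : ℝ => c * (1 - κ) ^ (a n - 1))
        MeasureTheory.volume (1/2) 1 := by
      have h1 : IntervalIntegrable (fun u : ℝ => u ^ (a n - 1))
          MeasureTheory.volume 0 (1/2) := intervalIntegrable_rpow' (by linarith)
      have h2 := (h1.comp_sub_left 1).symm
      norm_num at h2
      exact h2.const_mul c
    have hmono : (∫ κ in (1/2 : ℝ)..1, c * (1 - κ) ^ (a n - 1))
        ≤ ∫ κ in (1/2 : ℝ)..1, κ ^ q * (1 - κ) ^ (a n - 1) * Real.exp (-κ * x^2 / 2) := by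
      apply intervalIntegral.integral_mono_on (by norm_num) hIg hIDR
      intro u hu
      have h0 : (1/2 : ℝ) ≤ u := hu.1
      have h1 : u ≤ 1 := hu.2
      have hw : (0:ℝ) ≤ (1 - u) ^ (a n - 1) := Real.rpow_nonneg (by linarith) _
      have e1 : (1/2 : ℝ) ^ q ≤ u ^ q :=
        Real.rpow_le_rpow (by norm_num) h0 hq.le
      have e2 : Real.exp (-x^2 / 2) ≤ Real.exp (-u * x^2 / 2) := by
        apply Real.exp_le_exp.mpr
        nlinarith [sq_nonneg x]
      calc c * (1 - u) ^ (a n - 1)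
          = (1/2 : ℝ) ^ q * (1 - u) ^ (a n - 1) * Real.exp (-x^2 / 2) := by
            rw [hc]; ring
        _ ≤ u ^ q * (1 - u) ^ (a n - 1) * Real.exp (-u * x^2 / 2) := by
            gcongr
    have hval : (∫ κ in (1/2 : ℝ)..1, c * (1 - κ) ^ (a n - 1))
        = c * ((1/2 : ℝ) ^ (a n) / a n) := by
      rw [intervalIntegral.integral_const_mul]
      congr 1
      have := intervalIntegral.integral_comp_sub_left (a := (1/2:ℝ)) (b := 1)
        (fun u : ℝ => u ^ (a n - 1)) 1
      norm_num at this
      rw [this, integral_rpow (Or.inl (by linarith))]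
      rw [Real.zero_rpow (by linarith)]
      norm_num
    have hhalf : (1/2 : ℝ) ≤ (1/2 : ℝ) ^ (a n) := by
      have := Real.rpow_le_rpow_of_exponent_ge (x := (1/2:ℝ)) (by norm_num) (by norm_num)
        (han1.le)
      simpa using this
    have hfin : c / (2 * a n) ≤ c * ((1/2 : ℝ) ^ (a n) / a n) := by
      rw [div_le_iff₀ (by positivity)]
      have : c * ((1/2 : ℝ) ^ (a n) / a n) * (2 * a n) = c * ((1/2:ℝ) ^ (a n) * 2) := by
        field_simp
      rw [this]
      nlinarith
    calc c / (2 * a n) ≤ c * ((1/2 : ℝ) ^ (a n) / a n) := hfin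
      _ = ∫ κ in (1/2 : ℝ)..1, c * (1 - κ) ^ (a n - 1) := hval.symm
      _ ≤ ∫ κ in (1/2 : ℝ)..1, κ ^ q * (1 - κ) ^ (a n - 1) * Real.exp (-κ * x^2 / 2) := hmono
      _ ≤ D n := by rw [hsplit]; linarith
  have hD0 : ∀ n, 0 < D n := fun n => lt_of_lt_of_le
    (by have := (ha n).1; positivity) (hDlb n)
  -- squeeze
  have hub : ∀ n, N n / D n ≤ 2 * a n / c := by
    intro n
    have h1 : N n / D n ≤ 1 / D n := div_le_div₀ zero_le_one (hN1 n) (hD0 n) le_rfl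
    have h2 : 1 / D n ≤ 1 / (c / (2 * a n)) := by
      apply one_div_le_one_div_of_le
      · have := (ha n).1; positivity
      · exact hDlb n
    have h3 : 1 / (c / (2 * a n)) = 2 * a n / c := by
      rw [one_div_div]
    linarith
  have hlb : ∀ n, 0 ≤ N n / D n := fun n => div_nonneg (hN0 n) (hD0 n).le
  have htend : Tendsto (fun n => 2 * a n / c) atTop (nhds 0) := by
    have := (ha0.const_mul (2:ℝ)).div_const c
    simpa using this
  have : Tendsto (fun n => N n / D n) atTop (nhds 0) := squeeze_zero hlb hub htend
  exact this
end

section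
/- Fix a ∈ (0,1), b ∈ (1/2,∞), and η ∈ (0,1). Then Pr(κ ≤ η | x) = (∫₀^η κ^{b-1/2}(1-κ)^{a-1} e^{-κx²/2} dκ)/(∫₀¹ κ^{b-1/2}(1-κ)^{a-1} e^{-κx²/2} dκ) → 1 as x → ∞. -/
open Real Filter

/-- For fixed a ∈ (0,1), b > 1/2, η ∈ (0,1), Pr(κ ≤ η | x) → 1 as x → ∞. -/
theorem stmt_4 (a b η : ℝ) (ha : a ∈ Set.Ioo (0:ℝ) 1) (hb : b ∈ Set.Ioi (1/2 : ℝ))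
    (hη : η ∈ Set.Ioo (0:ℝ) 1) :
    Tendsto (fun x : ℝ =>
      (∫ κ in (0:ℝ)..η, κ ^ (b - 1/2) * (1 - κ) ^ (a - 1) * Real.exp (-κ * x^2 / 2)) /
        (∫ κ in (0:ℝ)..1, κ ^ (b - 1/2) * (1 - κ) ^ (a - 1) * Real.exp (-κ * x^2 / 2)))
      atTop (nhds 1) := by
  obtain ⟨ha0, ha1⟩ := ha
  rw [Set.mem_Ioi] at hb
  obtain ⟨hη0, hη1⟩ := hη
  set p := b - 1/2 with hpdef
  set q := a - 1 with hqdef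
  have hp0 : 0 < p := by rw [hpdef]; linarith
  have hq1 : -1 < q := by rw [hqdef]; linarith
  set g : ℝ → ℝ := fun κ => κ ^ p * (1 - κ) ^ q with hgdef
  -- continuity of κ ^ p
  have hpow_cont : Continuous (fun κ : ℝ => κ ^ p) := by
    apply continuous_iff_continuousAt.2
    intro κ
    exact Real.continuousAt_rpow_const κ p (Or.inr hp0.le)
  -- integrability of g on subintervals of [0,1]
  have hgint : ∀ c d : ℝ, c ∈ Set.Icc (0:ℝ) 1 → d ∈ Set.Icc (0:ℝ) 1 →
      IntervalIntegrable g MeasureTheory.volume c d := by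
    intro c d hc hd
    have h1 : IntervalIntegrable (fun κ : ℝ => (1 - κ) ^ q) MeasureTheory.volume 0 1 := by
      have := (intervalIntegral.intervalIntegrable_rpow' (a := 1) (b := 0) hq1).comp_sub_left 1
      simpa using this
    have h2 : IntervalIntegrable (fun κ : ℝ => (1 - κ) ^ q * κ ^ p)
        MeasureTheory.volume 0 1 := h1.mul_continuousOn hpow_cont.continuousOn
    have h3 : IntervalIntegrable g MeasureTheory.volume 0 1 := by
      simpa [hgdef, mul_comm] using h2
    exact h3.mono_set (Set.uIcc_subset_uIcc (by simpa using hc) (by simpa using hd))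
  -- nonnegativity of g on [0,1]
  have hg_nonneg : ∀ κ ∈ Set.Icc (0:ℝ) 1, 0 ≤ g κ := by
    intro κ hκ
    exact mul_nonneg (Real.rpow_nonneg hκ.1 p) (Real.rpow_nonneg (by linarith [hκ.2]) q)
  have hg_pos : ∀ κ ∈ Set.Ioo (0:ℝ) 1, 0 < g κ := by
    intro κ hκ
    exact mul_pos (Real.rpow_pos_of_pos hκ.1 p) (Real.rpow_pos_of_pos (by linarith [hκ.2]) q)
  -- the integrand, with the exponential factor
  set F : ℝ → ℝ → ℝ := fun x κ => κ ^ p * (1 - κ) ^ q * Real.exp (-κ * x^2 / 2) with hFdef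
  have hFg : ∀ x κ, F x κ = g κ * Real.exp (-κ * x^2 / 2) := fun x κ => rfl
  have hFint : ∀ (x : ℝ) (c d : ℝ), c ∈ Set.Icc (0:ℝ) 1 → d ∈ Set.Icc (0:ℝ) 1 →
      IntervalIntegrable (F x) MeasureTheory.volume c d := by
    intro x c d hc hd
    exact (hgint c d hc hd).mul_continuousOn
      (Real.continuous_exp.comp (by continuity)).continuousOn
  have hF_nonneg : ∀ x : ℝ, ∀ κ ∈ Set.Icc (0:ℝ) 1, 0 ≤ F x κ :=
    fun x κ hκ => mul_nonneg (hg_nonneg κ hκ) (Real.exp_pos _).le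
  -- memberships
  have hmem0 : (0:ℝ) ∈ Set.Icc (0:ℝ) 1 := by constructor <;> norm_num
  have hmem1 : (1:ℝ) ∈ Set.Icc (0:ℝ) 1 := by constructor <;> norm_num
  have hmemη : η ∈ Set.Icc (0:ℝ) 1 := ⟨hη0.le, hη1.le⟩
  have hmemη2 : η/2 ∈ Set.Icc (0:ℝ) 1 := ⟨by linarith, by linarith⟩
  -- constants
  set C₁ : ℝ := ∫ κ in (0:ℝ)..(η/2), g κ with hC₁def
  set C₂ : ℝ := ∫ κ in η..(1:ℝ), g κ with hC₂def
  have hC₁pos : 0 < C₁ := by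
    apply intervalIntegral.intervalIntegral_pos_of_pos_on (hgint 0 (η/2) hmem0 hmemη2)
    · intro κ hκ
      exact hg_pos κ ⟨hκ.1, by linarith [hκ.2]⟩
    · linarith
  have hC₂nonneg : 0 ≤ C₂ := by
    apply intervalIntegral.integral_nonneg hη1.le
    intro κ hκ
    exact hg_nonneg κ ⟨by linarith [hκ.1], hκ.2⟩
  -- abbreviations for the three integrals
  set N : ℝ → ℝ := fun x => ∫ κ in (0:ℝ)..η, F x κ with hNdef
  set T : ℝ → ℝ := fun x => ∫ κ in η..(1:ℝ), F x κ with hTdef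
  set D : ℝ → ℝ := fun x => ∫ κ in (0:ℝ)..(1:ℝ), F x κ with hDdef
  have hsplit : ∀ x, N x + T x = D x := fun x =>
    intervalIntegral.integral_add_adjacent_intervals
      (hFint x 0 η hmem0 hmemη) (hFint x η 1 hmemη hmem1)
  -- lower bound on D
  have hD_lb : ∀ x : ℝ, Real.exp (-η * x^2 / 4) * C₁ ≤ D x := by
    intro x
    have step1 : Real.exp (-η * x^2 / 4) * C₁ ≤ ∫ κ in (0:ℝ)..(η/2), F x κ := by
      rw [hC₁def, ← intervalIntegral.integral_const_mul]
      apply intervalIntegral.integral_mono_on (by linarith)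
        ((hgint 0 (η/2) hmem0 hmemη2).const_mul _) (hFint x 0 (η/2) hmem0 hmemη2)
      intro κ hκ
      rw [hFg, mul_comm (g κ)]
      apply mul_le_mul_of_nonneg_right _ (hg_nonneg κ ⟨hκ.1, by linarith [hκ.2]⟩)
      apply Real.exp_le_exp.2
      nlinarith [sq_nonneg x, hκ.1, hκ.2]
    have step2 : (∫ κ in (0:ℝ)..(η/2), F x κ) ≤ D x := by
      apply intervalIntegral.integral_mono_interval (le_refl (0:ℝ)) (by linarith) (by linarith)
      · exact MeasureTheory.ae_restrict_of_forall_mem measurableSet_Ioc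
          (fun κ hκ => hF_nonneg x κ ⟨hκ.1.le, hκ.2⟩)
      · exact hFint x 0 1 hmem0 hmem1
    linarith
  have hD_pos : ∀ x : ℝ, 0 < D x := fun x =>
    lt_of_lt_of_le (by positivity) (hD_lb x)
  -- upper bound on T
  have hT_ub : ∀ x : ℝ, T x ≤ Real.exp (-η * x^2 / 2) * C₂ := by
    intro x
    rw [hTdef, hC₂def, ← intervalIntegral.integral_const_mul]
    apply intervalIntegral.integral_mono_on hη1.le (hFint x η 1 hmemη hmem1)
      ((hgint η 1 hmemη hmem1).const_mul _)
    intro κ hκ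
    rw [hFg, mul_comm (g κ)]
    apply mul_le_mul_of_nonneg_right _ (hg_nonneg κ ⟨by linarith [hκ.1], hκ.2⟩)
    apply Real.exp_le_exp.2
    nlinarith [sq_nonneg x, hκ.1]
  have hT_nonneg : ∀ x : ℝ, 0 ≤ T x := by
    intro x
    apply intervalIntegral.integral_nonneg hη1.le
    intro κ hκ
    exact hF_nonneg x κ ⟨by linarith [hκ.1], hκ.2⟩
  -- the ratio T/D tends to 0
  have hTD : Tendsto (fun x => T x / D x) atTop (nhds 0) := by
    have hbound : ∀ x : ℝ, T x / D x ≤ Real.exp (-η * x^2 / 4) * (C₂ / C₁) := by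
      intro x
      have h1 : T x / D x ≤ (Real.exp (-η * x^2 / 2) * C₂) / (Real.exp (-η * x^2 / 4) * C₁) := by
        apply div_le_div₀ (by positivity) (hT_ub x) (by positivity) (hD_lb x)
      refine h1.trans_eq ?_
      rw [mul_div_mul_comm, ← Real.exp_sub]
      ring_nf
    have hupper : Tendsto (fun x : ℝ => Real.exp (-η * x^2 / 4) * (C₂ / C₁)) atTop (nhds 0) := by
      have h1 : Tendsto (fun x : ℝ => -η * x^2 / 4) atTop atBot := by
        have h2 : Tendsto (fun x : ℝ => x^2) atTop atTop := by
          exact tendsto_pow_atTop (by norm_num)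
        have h3 : Tendsto (fun x : ℝ => x^2 * (-η/4)) atTop atBot :=
          h2.atTop_mul_const_of_neg (by linarith)
        convert h3 using 2 with x
        ring
      have := (Real.tendsto_exp_atBot.comp h1).mul_const (C₂ / C₁)
      simpa using this
    apply tendsto_of_tendsto_of_tendsto_of_le_of_le tendsto_const_nhds hupper
    · intro x
      exact div_nonneg (hT_nonneg x) (hD_pos x).le
    · exact hbound
  -- conclude
  have key : Tendsto (fun x => N x / D x) atTop (nhds 1) := by
    have h1 : Tendsto (fun x => 1 - T x / D x) atTop (nhds 1) := by
      have := tendsto_const_nhds (x := (1:ℝ)) (f := atTop (α := ℝ)) |>.sub hTD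
      simpa using this
    apply h1.congr
    intro x
    have hD := (hD_pos x).ne'
    field_simp
    linarith [hsplit x]
  exact key
end

section
/- Fix a ∈ (0,1), b ∈ (1/2,∞). Then the posterior mean of 1-κ, namely E(1-κ|x) = (∫₀¹ κ^{b-1/2}(1-κ)^a e^{-κx²/2} dκ)/(∫₀¹ κ^{b-1/2}(1-κ)^{a-1} e^{-κx²/2} dκ), converges to 1 as x → ∞. -/
open Real Filter

open Real Filter MeasureTheory intervalIntegral
set_option maxHeartbeats 1000000

namespace NBPaux

lemma cont_g (p t : ℝ) (hp : 0 ≤ p) :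
    Continuous (fun κ : ℝ => κ ^ p * Real.exp (-κ * t)) :=
  (Real.continuous_rpow_const hp).mul
    (Real.continuous_exp.comp (by continuity))

lemma intble (p q t : ℝ) (hp : 0 ≤ p) (hq : -1 < q) :
    IntervalIntegrable (fun κ : ℝ => κ ^ p * (1 - κ) ^ q * Real.exp (-κ * t))
      volume 0 1 := by
  have h1 : IntervalIntegrable (fun κ : ℝ => (1 - κ) ^ q) volume 0 1 := by
    have := (intervalIntegrable_rpow' (a := 0) (b := 1) hq).comp_sub_left 1
    simpa using this.symm
  have key : (fun κ : ℝ => κ ^ p * (1 - κ) ^ q * Real.exp (-κ * t))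
      = fun κ : ℝ => (1 - κ) ^ q * (κ ^ p * Real.exp (-κ * t)) := by
    funext κ; ring
  rw [key]
  exact h1.mul_continuousOn (cont_g p t hp).continuousOn

lemma pos_int (p q t : ℝ) (hp : 0 ≤ p) (hq : -1 < q) :
    0 < ∫ κ in (0:ℝ)..1, κ ^ p * (1 - κ) ^ q * Real.exp (-κ * t) := by
  refine intervalIntegral_pos_of_pos_on (intble p q t hp hq) (fun x hx => ?_) one_pos
  exact mul_pos (mul_pos (Real.rpow_pos_of_pos hx.1 p)
    (Real.rpow_pos_of_pos (by linarith [hx.2]) q)) (Real.exp_pos _)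

end NBPaux

namespace NBPaux

lemma nonneg_integrand (p q : ℝ) (t : ℝ) {κ : ℝ} (h0 : 0 ≤ κ) (h1 : κ ≤ 1) :
    0 ≤ κ ^ p * (1 - κ) ^ q * Real.exp (-κ * t) :=
  mul_nonneg (mul_nonneg (Real.rpow_nonneg h0 p) (Real.rpow_nonneg (by linarith) q))
    (Real.exp_pos _).le

lemma aux (p a : ℝ) (hp : 0 < p) (ha0 : 0 < a) (ha1 : a < 1) :
    Tendsto (fun t : ℝ =>
      (∫ κ in (0:ℝ)..1, κ ^ p * (1 - κ) ^ a * Real.exp (-κ * t)) /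
        (∫ κ in (0:ℝ)..1, κ ^ p * (1 - κ) ^ (a - 1) * Real.exp (-κ * t)))
      atTop (nhds 1) := by
  have hq : (-1:ℝ) < a - 1 := by linarith
  have hqa : (-1:ℝ) < a := by linarith
  rw [Metric.tendsto_nhds]
  intro ε hε
  set δ := min (ε/3) (1/2) with hδdef
  have hδ0 : 0 < δ := lt_min (by linarith) (by norm_num)
  have hδhalf : δ ≤ 1/2 := min_le_right _ _
  have hδ1 : δ < 1 := by linarith
  have hδε : 2*δ < ε := by
    have := min_le_left (ε/3) (1/2); simp only [hδdef]; linarith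
  set C := ∫ κ in δ..(1:ℝ), κ ^ p * (1 - κ) ^ (a-1) * Real.exp (-κ * 0) with hC
  set K := C * Real.exp 1 * (p+1) with hK
  have hexp1 : Real.exp 1 * Real.exp (-1) = 1 := by
    rw [← Real.exp_add]; norm_num
  have hlim : Tendsto (fun t : ℝ => K * (t ^ (p+1) * Real.exp (-δ * t))) atTop (nhds 0) := by
    have := (tendsto_rpow_mul_exp_neg_mul_atTop_nhds_zero (p+1) δ hδ0).const_mul K
    simpa using this
  have hev : ∀ᶠ t in atTop, K * (t ^ (p+1) * Real.exp (-δ * t)) < δ :=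
    hlim.eventually_lt_const hδ0
  filter_upwards [hev, eventually_ge_atTop (2:ℝ)] with t hK2 ht2
  have ht0 : (0:ℝ) < t := by linarith
  have hint_a := intble p a t hp.le hqa
  have hint_a1 := intble p (a-1) t hp.le hq
  set N := ∫ κ in (0:ℝ)..1, κ ^ p * (1 - κ) ^ a * Real.exp (-κ * t) with hN
  set D := ∫ κ in (0:ℝ)..1, κ ^ p * (1 - κ) ^ (a-1) * Real.exp (-κ * t) with hD
  set T := ∫ κ in δ..(1:ℝ), κ ^ p * (1 - κ) ^ (a-1) * Real.exp (-κ * t) with hT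
  have hDpos : 0 < D := pos_int p (a-1) t hp.le hq
  -- subset facts
  have sub1 : Set.uIcc (0:ℝ) δ ⊆ Set.uIcc (0:ℝ) 1 := by
    rw [Set.uIcc_of_le hδ0.le, Set.uIcc_of_le (by norm_num : (0:ℝ) ≤ 1)]
    exact Set.Icc_subset_Icc le_rfl (by linarith)
  have sub2 : Set.uIcc δ (1:ℝ) ⊆ Set.uIcc (0:ℝ) 1 := by
    rw [Set.uIcc_of_le hδ1.le, Set.uIcc_of_le (by norm_num : (0:ℝ) ≤ 1)]
    exact Set.Icc_subset_Icc hδ0.le le_rfl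
  -- N ≤ D
  have hND : N ≤ D := by
    apply intervalIntegral.integral_mono_on (by norm_num) hint_a hint_a1
    intro κ hκ
    rcases eq_or_lt_of_le hκ.2 with h1 | h1
    · subst h1
      simp [Real.zero_rpow ha0.ne', Real.zero_rpow (show a - 1 ≠ 0 by linarith)]
    · have h2 : 0 < 1 - κ := by linarith
      have hrp : (1-κ) ^ a ≤ (1-κ) ^ (a-1) :=
        Real.rpow_le_rpow_of_exponent_ge h2 (by linarith [hκ.1]) (by linarith)
      exact mul_le_mul_of_nonneg_right
        (mul_le_mul_of_nonneg_left hrp (Real.rpow_nonneg hκ.1 p)) (Real.exp_pos _).le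
  have hN0 : 0 ≤ N :=
    intervalIntegral.integral_nonneg (by norm_num)
      (fun κ hκ => nonneg_integrand p a t hκ.1 hκ.2)
  have hT0 : 0 ≤ T :=
    intervalIntegral.integral_nonneg hδ1.le
      (fun κ hκ => nonneg_integrand p (a-1) t (le_trans hδ0.le hκ.1) hκ.2)
  -- split D
  have hsplitD : (∫ κ in (0:ℝ)..δ, κ ^ p * (1 - κ) ^ (a-1) * Real.exp (-κ * t)) + T = D :=
    intervalIntegral.integral_add_adjacent_intervals (hint_a1.mono_set sub1)
      (hint_a1.mono_set sub2)
  -- lower bound N by integral over [0,δ]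
  have hsplitN : (∫ κ in (0:ℝ)..δ, κ ^ p * (1 - κ) ^ a * Real.exp (-κ * t))
      + (∫ κ in δ..(1:ℝ), κ ^ p * (1 - κ) ^ a * Real.exp (-κ * t)) = N :=
    intervalIntegral.integral_add_adjacent_intervals (hint_a.mono_set sub1)
      (hint_a.mono_set sub2)
  have htail_a : 0 ≤ ∫ κ in δ..(1:ℝ), κ ^ p * (1 - κ) ^ a * Real.exp (-κ * t) :=
    intervalIntegral.integral_nonneg hδ1.le
      (fun κ hκ => nonneg_integrand p a t (le_trans hδ0.le hκ.1) hκ.2)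
  have hN2 : (1-δ) * (∫ κ in (0:ℝ)..δ, κ ^ p * (1 - κ) ^ (a-1) * Real.exp (-κ * t))
      ≤ ∫ κ in (0:ℝ)..δ, κ ^ p * (1 - κ) ^ a * Real.exp (-κ * t) := by
    rw [← intervalIntegral.integral_const_mul]
    apply intervalIntegral.integral_mono_on hδ0.le
      ((hint_a1.mono_set sub1).const_mul _) (hint_a.mono_set sub1)
    intro κ hκ
    have h1κ : (0:ℝ) < 1 - κ := by
      have := hκ.2; linarith
    have key : (1-κ) ^ a = (1-κ) ^ (a-1) * (1-κ) := by
      nth_rewrite 1 [show a = a - 1 + 1 by ring]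
      exact Real.rpow_add_one h1κ.ne' (a-1)
    rw [key]
    have hAB : 0 ≤ κ ^ p * (1-κ) ^ (a-1) :=
      mul_nonneg (Real.rpow_nonneg hκ.1 p) (Real.rpow_nonneg h1κ.le (a-1))
    calc (1-δ) * (κ ^ p * (1-κ) ^ (a-1) * Real.exp (-κ*t))
        = (κ ^ p * (1-κ) ^ (a-1)) * (1-δ) * Real.exp (-κ*t) := by ring
      _ ≤ (κ ^ p * (1-κ) ^ (a-1)) * (1-κ) * Real.exp (-κ*t) :=
          mul_le_mul_of_nonneg_right
            (mul_le_mul_of_nonneg_left (by linarith [hκ.2]) hAB) (Real.exp_pos _).le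
      _ = κ ^ p * ((1-κ) ^ (a-1) * (1-κ)) * Real.exp (-κ*t) := by ring
  have hNlow : (1-δ) * (D - T) ≤ N := by
    have h0δ : (∫ κ in (0:ℝ)..δ, κ ^ p * (1 - κ) ^ (a-1) * Real.exp (-κ * t)) = D - T := by
      linarith
    rw [h0δ] at hN2
    linarith
  -- tail bound
  have hTail : T ≤ Real.exp (-δ*t) * C := by
    rw [hC, ← intervalIntegral.integral_const_mul]
    apply intervalIntegral.integral_mono_on hδ1.le (hint_a1.mono_set sub2)
      (((intble p (a-1) 0 hp.le hq).mono_set sub2).const_mul _)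
    intro κ hκ
    have h0κ : 0 ≤ κ := le_trans hδ0.le hκ.1
    have hexp : Real.exp (-κ*t) ≤ Real.exp (-δ*t) :=
      Real.exp_le_exp.mpr (by nlinarith [hκ.1])
    have hAB : 0 ≤ κ ^ p * (1-κ) ^ (a-1) :=
      mul_nonneg (Real.rpow_nonneg h0κ p) (Real.rpow_nonneg (by linarith [hκ.2]) (a-1))
    have e0 : Real.exp (-κ*0) = 1 := by simp
    calc κ ^ p * (1-κ) ^ (a-1) * Real.exp (-κ*t)
        ≤ κ ^ p * (1-κ) ^ (a-1) * Real.exp (-δ*t) := mul_le_mul_of_nonneg_left hexp hAB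
      _ = Real.exp (-δ*t) * (κ ^ p * (1-κ) ^ (a-1) * Real.exp (-κ*0)) := by rw [e0]; ring
  -- lower bound on D
  set s := 1/t with hs
  have hs0 : 0 < s := by positivity
  have hshalf : s ≤ 1/2 := by
    rw [hs, div_le_div_iff₀ ht0 (by norm_num)]; linarith
  have hst : s * t = 1 := by rw [hs]; field_simp
  have subs1 : Set.uIcc (0:ℝ) s ⊆ Set.uIcc (0:ℝ) 1 := by
    rw [Set.uIcc_of_le hs0.le, Set.uIcc_of_le (by norm_num : (0:ℝ) ≤ 1)]
    exact Set.Icc_subset_Icc le_rfl (by linarith)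
  have subs2 : Set.uIcc s (1:ℝ) ⊆ Set.uIcc (0:ℝ) 1 := by
    rw [Set.uIcc_of_le (by linarith), Set.uIcc_of_le (by norm_num : (0:ℝ) ≤ 1)]
    exact Set.Icc_subset_Icc hs0.le le_rfl
  have hsplitD2 : (∫ κ in (0:ℝ)..s, κ ^ p * (1 - κ) ^ (a-1) * Real.exp (-κ * t))
      + (∫ κ in s..(1:ℝ), κ ^ p * (1 - κ) ^ (a-1) * Real.exp (-κ * t)) = D :=
    intervalIntegral.integral_add_adjacent_intervals (hint_a1.mono_set subs1)
      (hint_a1.mono_set subs2)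
  have htail2 : 0 ≤ ∫ κ in s..(1:ℝ), κ ^ p * (1 - κ) ^ (a-1) * Real.exp (-κ * t) :=
    intervalIntegral.integral_nonneg (by linarith)
      (fun κ hκ => nonneg_integrand p (a-1) t (le_trans hs0.le hκ.1) hκ.2)
  have hlow1 : (∫ κ in (0:ℝ)..s, Real.exp (-1) * κ ^ p)
      ≤ ∫ κ in (0:ℝ)..s, κ ^ p * (1 - κ) ^ (a-1) * Real.exp (-κ * t) := by
    apply intervalIntegral.integral_mono_on hs0.le
      ((intervalIntegrable_rpow' (by linarith : (-1:ℝ) < p)).const_mul _)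
      (hint_a1.mono_set subs1)
    intro κ hκ
    have h1κ : (0:ℝ) < 1 - κ := by linarith [hκ.2]
    have hB : (1:ℝ) ≤ (1-κ) ^ (a-1) := by
      have := Real.rpow_le_rpow_of_exponent_ge h1κ (by linarith [hκ.1]) (by linarith : a - 1 ≤ 0)
      simpa using this
    have hE : Real.exp (-1) ≤ Real.exp (-κ*t) := by
      apply Real.exp_le_exp.mpr
      have : κ * t ≤ s * t := mul_le_mul_of_nonneg_right hκ.2 ht0.le
      nlinarith
    have hA : 0 ≤ κ ^ p := Real.rpow_nonneg hκ.1 p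
    calc Real.exp (-1) * κ ^ p = κ ^ p * 1 * Real.exp (-1) := by ring
      _ ≤ κ ^ p * (1-κ) ^ (a-1) * Real.exp (-κ*t) := by
          apply mul_le_mul (mul_le_mul_of_nonneg_left hB hA) hE (Real.exp_pos _).le
          exact mul_nonneg hA (by linarith)
  have hlow2 : (∫ κ in (0:ℝ)..s, Real.exp (-1) * κ ^ p)
      = Real.exp (-1) * (s ^ (p+1) / (p+1)) := by
    rw [intervalIntegral.integral_const_mul, integral_rpow (Or.inl (by linarith))]
    rw [Real.zero_rpow (show p + 1 ≠ 0 by linarith)]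
    ring
  have hDlow : Real.exp (-1) * (s ^ (p+1) / (p+1)) ≤ D := by
    rw [← hlow2]; linarith
  set d := Real.exp (-1) * (s ^ (p+1) / (p+1)) with hd
  have hd0 : 0 < d :=
    mul_pos (Real.exp_pos _) (div_pos (Real.rpow_pos_of_pos hs0 _) (by linarith))
  have hs_inv : s ^ (p+1) = (t ^ (p+1))⁻¹ := by
    rw [hs, one_div, Real.inv_rpow ht0.le]
  have htp : (0:ℝ) < t ^ (p+1) := Real.rpow_pos_of_pos ht0 _
  clear_value δ C K s d N D T
  have hEqK : K * (t ^ (p+1) * Real.exp (-δ*t)) * d = Real.exp (-δ*t) * C := by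
    have h2 : (p+1:ℝ) ≠ 0 := by linarith
    rw [hd, hs_inv, hK, div_eq_mul_inv]
    calc C * Real.exp 1 * (p+1) * (t ^ (p+1) * Real.exp (-δ*t))
          * (Real.exp (-1) * ((t ^ (p+1))⁻¹ * (p+1)⁻¹))
        = (Real.exp 1 * Real.exp (-1)) * ((p+1) * (p+1)⁻¹) * (t ^ (p+1) * (t ^ (p+1))⁻¹)
          * (Real.exp (-δ*t) * C) := by ring
      _ = Real.exp (-δ*t) * C := by
          rw [hexp1, mul_inv_cancel₀ h2, mul_inv_cancel₀ htp.ne']; ring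
  have hTd : T < δ * d := by
    calc T ≤ Real.exp (-δ*t) * C := hTail
      _ = K * (t ^ (p+1) * Real.exp (-δ*t)) * d := hEqK.symm
      _ < δ * d := mul_lt_mul_of_pos_right hK2 hd0
  have hTD : T < δ * D := lt_of_lt_of_le hTd (mul_le_mul_of_nonneg_left hDlow hδ0.le)
  -- conclude
  have key : (D - N)/D < ε := by
    rw [div_lt_iff₀ hDpos]
    nlinarith [mul_nonneg hδ0.le hT0, mul_pos (show (0:ℝ) < ε - 2*δ by linarith) hDpos,
      mul_pos hδ0 hDpos]
  rw [Real.dist_eq, abs_sub_comm, abs_of_nonneg (sub_nonneg.mpr ((div_le_one hDpos).mpr hND))]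
  calc 1 - N/D = (D-N)/D := by rw [sub_div, div_self hDpos.ne']
    _ < ε := key

end NBPaux

/-- For fixed a ∈ (0,1), b > 1/2, E(1-κ|x) → 1 as x → ∞. -/
theorem stmt_5 (a b : ℝ) (ha : a ∈ Set.Ioo (0:ℝ) 1) (hb : b ∈ Set.Ioi (1/2 : ℝ)) :
    Tendsto (fun x : ℝ =>
      (∫ κ in (0:ℝ)..1, κ ^ (b - 1/2) * (1 - κ) ^ a * Real.exp (-κ * x^2 / 2)) /
        (∫ κ in (0:ℝ)..1, κ ^ (b - 1/2) * (1 - κ) ^ (a - 1) * Real.exp (-κ * x^2 / 2)))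
      atTop (nhds 1) := by
  obtain ⟨ha0, ha1⟩ := ha
  have hb' : (1:ℝ)/2 < b := hb
  have hp : 0 < b - 1/2 := by linarith
  have hsq : Tendsto (fun x : ℝ => x^2/2) atTop atTop :=
    (tendsto_pow_atTop two_ne_zero).atTop_div_const (by norm_num)
  have h := (NBPaux.aux (b-1/2) a hp ha0 ha1).comp hsq
  simp only [Function.comp_def] at h
  simpa only [mul_div_assoc] using h
end

section
/- Let a ∈ (0,1), b ∈ (1/2,∞), η ∈ (0,1), δ ∈ (0,1), and x ≠ 0. Then E(κ·1{κ<η} | x) = (∫₀^η κ^{b+1/2}(1-κ)^{a-1} e^{-κx²/2} dκ)/(∫₀¹ κ^{b-1/2}(1-κ)^{a-1} e^{-κx²/2} dκ) ≤ (1-η)^{a-1} Γ(b+3/2) 2^{b+3/2} · [x² ∫₀^{x²} t^{b-1/2} e^{-t/2} dt]^{-1}. -/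
open Real MeasureTheory Set intervalIntegral

lemma sub_lemma (c s : ℝ) (hs : 0 < s) :
    ∫ κ in (0:ℝ)..1, κ ^ c * Real.exp (-κ * s / 2)
      = s ^ (-(c+1)) * ∫ t in (0:ℝ)..s, t ^ c * Real.exp (-t / 2) := by
  have h := intervalIntegral.integral_comp_mul_right
    (a := 0) (b := 1) (fun t => t ^ c * Real.exp (-t / 2)) (ne_of_gt hs)
  simp only [zero_mul, one_mul, smul_eq_mul] at h
  have h2 : (∫ κ in (0:ℝ)..1, (κ * s) ^ c * Real.exp (-(κ * s) / 2))
      = s ^ c * ∫ κ in (0:ℝ)..1, κ ^ c * Real.exp (-κ * s / 2) := by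
    rw [← intervalIntegral.integral_const_mul]
    apply intervalIntegral.integral_congr
    intro κ hκ
    rw [Set.uIcc_of_le (by norm_num : (0:ℝ) ≤ 1)] at hκ
    simp only [Real.mul_rpow hκ.1 hs.le]
    ring_nf
  rw [h2] at h
  have hsc : s ^ c ≠ 0 := by positivity
  have e : s ^ (-(c+1)) = (s ^ c)⁻¹ * s⁻¹ := by
    rw [← Real.rpow_neg_one s, ← Real.rpow_neg hs.le, ← Real.rpow_add hs]
    ring_nf
  calc ∫ κ in (0:ℝ)..1, κ ^ c * Real.exp (-κ * s / 2)
      = (s ^ c)⁻¹ * (s ^ c * ∫ κ in (0:ℝ)..1, κ ^ c * Real.exp (-κ * s / 2)) := by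
        rw [inv_mul_cancel_left₀ hsc]
    _ = (s ^ c)⁻¹ * (s⁻¹ * ∫ t in (0:ℝ)..s, t ^ c * Real.exp (-t / 2)) := by rw [h]
    _ = s ^ (-(c+1)) * ∫ t in (0:ℝ)..s, t ^ c * Real.exp (-t / 2) := by rw [e]; ring

-- Gamma tail bound for the numerator auxiliary integral
lemma gamma_tail (b s η : ℝ) (hb : 1/2 < b) (hs : 0 < s) (hη : 0 < η) :
    ∫ κ in (0:ℝ)..η, κ ^ (b + 1/2) * Real.exp (-κ * s / 2)
      ≤ Real.Gamma (b + 3/2) * 2 ^ (b + 3/2) * s ^ (-(b + 3/2)) := by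
  have hint : IntegrableOn (fun t : ℝ => t ^ (b + 1/2) * Real.exp (-t * s / 2)) (Ioi 0) := by
    have hi := integrableOn_rpow_mul_exp_neg_mul_rpow
      (s := b + 1/2) (p := 1) (b := s/2) (by linarith) one_pos (by positivity)
    simp only [Real.rpow_one] at hi
    exact hi.congr_fun (fun t ht => by beta_reduce; rw [show -(s/2) * t = -t * s / 2 by ring])
      measurableSet_Ioi
  have step1 : ∫ κ in (0:ℝ)..η, κ ^ (b + 1/2) * Real.exp (-κ * s / 2)
      ≤ ∫ t in Ioi (0:ℝ), t ^ (b + 1/2) * Real.exp (-t * s / 2) := by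
    rw [intervalIntegral.integral_of_le hη.le]
    apply setIntegral_mono_set hint
    · filter_upwards [self_mem_ae_restrict measurableSet_Ioi] with t ht
      have : (0:ℝ) < t := ht
      positivity
    · exact HasSubset.Subset.eventuallyLE Ioc_subset_Ioi_self
  have step2 : ∫ t in Ioi (0:ℝ), t ^ (b + 1/2) * Real.exp (-t * s / 2)
      = Real.Gamma (b + 3/2) * 2 ^ (b + 3/2) * s ^ (-(b + 3/2)) := by
    have h := integral_rpow_mul_exp_neg_mul_Ioi (a := b + 3/2) (r := s/2)
      (by linarith) (by positivity)
    have e1 : (fun t : ℝ => t ^ (b + 3/2 - 1) * Real.exp (-(s/2 * t)))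
        = fun t : ℝ => t ^ (b + 1/2) * Real.exp (-t * s / 2) := by
      funext t
      rw [show b + 3/2 - 1 = b + 1/2 by ring, show -(s/2 * t) = -t * s / 2 by ring]
    rw [e1] at h
    rw [h, show (1:ℝ)/(s/2) = 2/s by ring,
      Real.div_rpow (by norm_num) hs.le, div_eq_mul_inv, ← Real.rpow_neg hs.le]
    ring
  exact step2 ▸ step1

set_option maxHeartbeats 1000000 in
/-- Bound on E(κ·1{κ<η} | x) in terms of the incomplete Gamma-type integral. -/
theorem stmt_9 (a b η δ x : ℝ) (ha : a ∈ Set.Ioo (0:ℝ) 1) (hb : b ∈ Set.Ioi (1/2 : ℝ))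
    (hη : η ∈ Set.Ioo (0:ℝ) 1) (hδ : δ ∈ Set.Ioo (0:ℝ) 1) (hx : x ≠ 0) :
    (∫ κ in (0:ℝ)..η, κ ^ (b + 1/2) * (1 - κ) ^ (a - 1) * Real.exp (-κ * x^2 / 2)) /
      (∫ κ in (0:ℝ)..1, κ ^ (b - 1/2) * (1 - κ) ^ (a - 1) * Real.exp (-κ * x^2 / 2))
    ≤ (1 - η) ^ (a - 1) * Real.Gamma (b + 3/2) * 2 ^ (b + 3/2) *
        (x^2 * ∫ t in (0:ℝ)..x^2, t ^ (b - 1/2) * Real.exp (-t / 2))⁻¹ := by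
  obtain ⟨ha0, ha1⟩ := ha
  obtain ⟨hη0, hη1⟩ := hη
  have hb' : 1/2 < b := hb
  have hs : 0 < x^2 := by positivity
  have h1η : 0 < 1 - η := by linarith
  set I := ∫ t in (0:ℝ)..x^2, t ^ (b - 1/2) * Real.exp (-t / 2) with hIdef
  set N := ∫ κ in (0:ℝ)..η, κ ^ (b + 1/2) * (1 - κ) ^ (a - 1) * Real.exp (-κ * x^2 / 2)
    with hNdef
  set D := ∫ κ in (0:ℝ)..1, κ ^ (b - 1/2) * (1 - κ) ^ (a - 1) * Real.exp (-κ * x^2 / 2)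
    with hDdef
  -- positivity of I
  have hIint : IntervalIntegrable (fun t : ℝ => t ^ (b - 1/2) * Real.exp (-t / 2))
      MeasureTheory.volume 0 (x^2) :=
    (intervalIntegral.intervalIntegrable_rpow' (by linarith)).mul_continuousOn
      (Continuous.continuousOn (by continuity))
  have hI : 0 < I := by
    apply intervalIntegral.intervalIntegral_pos_of_pos_on hIint _ hs
    intro t ht
    have h0 : 0 < t := ht.1
    positivity
  -- numerator bound
  have cexp : Continuous fun κ : ℝ => Real.exp (-κ * x^2 / 2) := by continuity
  have c1 : ContinuousOn (fun κ : ℝ => κ ^ (b + 1/2)) (Set.Icc 0 η) :=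
    continuousOn_id.rpow_const (fun κ _ => Or.inr (by linarith))
  have c2 : ContinuousOn (fun κ : ℝ => (1 - κ) ^ (a - 1)) (Set.Icc 0 η) :=
    (continuousOn_const.sub continuousOn_id).rpow_const
      (fun κ hκ => Or.inl (by show (1:ℝ) - κ ≠ 0; intro h; nlinarith [hκ.2]))
  have hint1 : IntervalIntegrable
      (fun κ : ℝ => κ ^ (b + 1/2) * (1 - κ) ^ (a - 1) * Real.exp (-κ * x^2 / 2))
      MeasureTheory.volume 0 η := by
    apply ContinuousOn.intervalIntegrable
    rw [Set.uIcc_of_le hη0.le]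
    exact (c1.mul c2).mul cexp.continuousOn
  have hint2 : IntervalIntegrable
      (fun κ : ℝ => (1 - η) ^ (a - 1) * (κ ^ (b + 1/2) * Real.exp (-κ * x^2 / 2)))
      MeasureTheory.volume 0 η := by
    apply ContinuousOn.intervalIntegrable
    rw [Set.uIcc_of_le hη0.le]
    exact continuousOn_const.mul (c1.mul cexp.continuousOn)
  have hNstep : N ≤ (1 - η) ^ (a - 1) *
      ∫ κ in (0:ℝ)..η, κ ^ (b + 1/2) * Real.exp (-κ * x^2 / 2) := by
    rw [← intervalIntegral.integral_const_mul]
    apply intervalIntegral.integral_mono_on hη0.le hint1 hint2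
    intro κ hκ
    have h2 : (1 - κ) ^ (a - 1) ≤ (1 - η) ^ (a - 1) :=
      Real.rpow_le_rpow_of_nonpos h1η (by linarith [hκ.2]) (by linarith)
    calc κ ^ (b + 1/2) * (1 - κ) ^ (a - 1) * Real.exp (-κ * x^2 / 2)
        ≤ κ ^ (b + 1/2) * (1 - η) ^ (a - 1) * Real.exp (-κ * x^2 / 2) := by
          apply mul_le_mul_of_nonneg_right _ (Real.exp_pos _).le
          exact mul_le_mul_of_nonneg_left h2 (Real.rpow_nonneg hκ.1 _)
      _ = (1 - η) ^ (a - 1) * (κ ^ (b + 1/2) * Real.exp (-κ * x^2 / 2)) := by ring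
  have hN : N ≤ (1 - η) ^ (a - 1) *
      (Real.Gamma (b + 3/2) * 2 ^ (b + 3/2) * (x^2) ^ (-(b + 3/2))) :=
    hNstep.trans (mul_le_mul_of_nonneg_left (gamma_tail b (x^2) η hb' hs hη0)
      (Real.rpow_nonneg h1η.le _))
  -- denominator bound
  have hintD2 : IntervalIntegrable (fun κ : ℝ => κ ^ (b - 1/2) * Real.exp (-κ * x^2 / 2))
      MeasureTheory.volume 0 1 :=
    (intervalIntegral.intervalIntegrable_rpow' (by linarith)).mul_continuousOn
      cexp.continuousOn
  have hgint : IntervalIntegrable (fun κ : ℝ => (1 - κ) ^ (a - 1))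
      MeasureTheory.volume 0 1 := by
    have h := (intervalIntegral.intervalIntegrable_rpow' (a := 0) (b := 1)
      (show (-1:ℝ) < a - 1 by linarith)).comp_sub_left 1
    simpa using h.symm
  have hintD : IntervalIntegrable
      (fun κ : ℝ => κ ^ (b - 1/2) * (1 - κ) ^ (a - 1) * Real.exp (-κ * x^2 / 2))
      MeasureTheory.volume 0 1 := by
    apply hgint.mono_fun
    · exact (((measurable_id.pow measurable_const).mul
        ((measurable_const.sub measurable_id).pow measurable_const)).mul
        (by measurability)).aestronglyMeasurable
    · rw [Set.uIoc_of_le (by norm_num : (0:ℝ) ≤ 1)]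
      filter_upwards [MeasureTheory.self_mem_ae_restrict measurableSet_Ioc] with κ hκ
      simp only [Real.norm_eq_abs]
      have hκ0 : 0 < κ := hκ.1
      have hκ1 : κ ≤ 1 := hκ.2
      have hr1 : κ ^ (b - 1/2) ≤ 1 := Real.rpow_le_one hκ0.le hκ1 (by linarith)
      have hr0 : 0 ≤ κ ^ (b - 1/2) := Real.rpow_nonneg hκ0.le _
      have he1 : Real.exp (-κ * x^2 / 2) ≤ 1 := Real.exp_le_one_iff.mpr (by
        have : 0 ≤ κ * x^2 := mul_nonneg hκ0.le (sq_nonneg x)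
        linarith)
      have hg0 : 0 ≤ (1 - κ) ^ (a - 1) := Real.rpow_nonneg (by linarith) _
      rw [abs_of_nonneg (by positivity), abs_of_nonneg hg0]
      have h3 : κ ^ (b - 1/2) * (1 - κ) ^ (a - 1) ≤ (1 - κ) ^ (a - 1) :=
        le_trans (mul_le_mul_of_nonneg_right hr1 hg0) (by rw [one_mul])
      have h4 := mul_le_mul h3 he1 (Real.exp_pos _).le hg0
      simpa using h4
  have hDstep : (∫ κ in (0:ℝ)..1, κ ^ (b - 1/2) * Real.exp (-κ * x^2 / 2)) ≤ D := by
    apply intervalIntegral.integral_mono_ae_restrict (by norm_num) hintD2 hintD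
    have hne : ∀ᵐ κ ∂(MeasureTheory.volume.restrict (Set.Icc (0:ℝ) 1)), κ ≠ 1 := by
      apply MeasureTheory.ae_restrict_of_ae
      exact MeasureTheory.ae_iff.mpr (by simp)
    filter_upwards [hne, MeasureTheory.ae_restrict_mem measurableSet_Icc] with κ hκne hκ
    have h1κ : 0 < 1 - κ := lt_of_le_of_ne (by linarith [hκ.2]) (by intro h; exact hκne (by linarith))
    have hg1 : 1 ≤ (1 - κ) ^ (a - 1) :=
      Real.one_le_rpow_of_pos_of_le_one_of_nonpos h1κ (by linarith [hκ.1]) (by linarith)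
    have hr0 : 0 ≤ κ ^ (b - 1/2) := Real.rpow_nonneg hκ.1 _
    have h5 := mul_le_mul_of_nonneg_right (mul_le_mul_of_nonneg_left hg1 hr0)
      (Real.exp_pos (-κ * x^2 / 2)).le
    simpa using h5
  have hD : (x^2) ^ (-(b + 1/2)) * I ≤ D := by
    have h := sub_lemma (b - 1/2) (x^2) hs
    rw [show -(b - 1/2 + 1) = -(b + 1/2) by ring] at h
    rw [← hIdef] at h
    rw [← h]
    exact hDstep
  have hD0 : 0 < D := lt_of_lt_of_le (by positivity) hD
  -- combine
  rw [div_le_iff₀ hD0]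
  have e2 : (x^2 * I)⁻¹ * ((x^2) ^ (-(b + 1/2)) * I) = (x^2) ^ (-(b + 3/2)) := by
    calc (x^2 * I)⁻¹ * ((x^2) ^ (-(b + 1/2)) * I)
        = (x^2) ^ (-(b + 1/2)) * (x^2)⁻¹ * (I⁻¹ * I) := by rw [mul_inv]; ring
      _ = (x^2) ^ (-(b + 1/2)) * (x^2) ^ (-1:ℝ) * 1 := by
          rw [inv_mul_cancel₀ (ne_of_gt hI), Real.rpow_neg_one]
      _ = (x^2) ^ (-(b + 3/2)) := by rw [mul_one, ← Real.rpow_add hs]; congr 1; ring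
  have hA : (0:ℝ) ≤ (1 - η) ^ (a - 1) * Real.Gamma (b + 3/2) * 2 ^ (b + 3/2) := by
    have := Real.Gamma_pos_of_pos (show (0:ℝ) < b + 3/2 by linarith)
    positivity
  calc N ≤ (1 - η) ^ (a - 1) *
        (Real.Gamma (b + 3/2) * 2 ^ (b + 3/2) * (x^2) ^ (-(b + 3/2))) := hN
    _ = ((1 - η) ^ (a - 1) * Real.Gamma (b + 3/2) * 2 ^ (b + 3/2)) *
        ((x^2 * I)⁻¹ * ((x^2) ^ (-(b + 1/2)) * I)) := by rw [e2]; ring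
    _ ≤ ((1 - η) ^ (a - 1) * Real.Gamma (b + 3/2) * 2 ^ (b + 3/2)) *
        ((x^2 * I)⁻¹ * D) := by
          apply mul_le_mul_of_nonneg_left _ hA
          exact mul_le_mul_of_nonneg_left hD (by positivity)
    _ = (1 - η) ^ (a - 1) * Real.Gamma (b + 3/2) * 2 ^ (b + 3/2) * (x^2 * I)⁻¹ * D := by
          ring
end

section
/- Let ξ ∈ (0, 1/2), δ ∈ (0,1), b ∈ (1/2,∞), and let (aₙ) ⊂ (0,1) with aₙ → 0. For X ~ N(0,1) under the null, the Type I error t₁ = Pr(E(1-κ|X; aₙ, b) > 1/2) satisfies, for all sufficiently large n, t₁ ≥ 2(1 - Φ(√((2/(ξ(1-δ))) log((b+1/2)(1-ξ)^{aₙ} / (aₙ (ξδ)^{b+1/2} (1/2 - ξ)))))), where Φ is the standard normal CDF. -/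
open Real Filter MeasureTheory ProbabilityTheory

lemma nbp_aux_integrable {p q : ℝ} (hp : 0 ≤ p) (hq : -1 < q) (x : ℝ) :
    IntervalIntegrable (fun κ : ℝ => κ ^ p * (1 - κ) ^ q * Real.exp (-κ * x^2 / 2))
      MeasureTheory.volume 0 1 := by
  have hmaj : IntervalIntegrable (fun κ : ℝ => (1 - κ) ^ q) MeasureTheory.volume 0 1 := by
    have := (intervalIntegral.intervalIntegrable_rpow' (a := 0) (b := 1) hq).comp_sub_left 1
    simpa using this.symm
  rw [intervalIntegrable_iff_integrableOn_Ioc_of_le (by norm_num)] at hmaj ⊢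
  apply hmaj.mono' ?_ ?_
  · apply Measurable.aestronglyMeasurable
    exact ((measurable_id.pow_const p).mul
      ((measurable_const.sub measurable_id).pow_const q)).mul
      (((measurable_id.neg.mul measurable_const).div measurable_const).exp)
  · filter_upwards [MeasureTheory.ae_restrict_mem measurableSet_Ioc] with κ hκ
    have h0 : (0:ℝ) ≤ κ := le_of_lt hκ.1
    have h1 : κ ≤ 1 := hκ.2
    have hq0 : (0:ℝ) ≤ (1 - κ) ^ q := Real.rpow_nonneg (by linarith) q
    rw [Real.norm_eq_abs, abs_of_nonneg (by positivity)]
    have e1 : κ ^ p ≤ 1 := Real.rpow_le_one h0 h1 hp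
    have e2 : Real.exp (-κ * x^2 / 2) ≤ 1 := by
      rw [Real.exp_le_one_iff]
      have : 0 ≤ κ * x^2 := by positivity
      linarith
    calc κ ^ p * (1 - κ) ^ q * Real.exp (-κ * x^2 / 2)
        ≤ 1 * (1 - κ) ^ q * 1 := by
          apply mul_le_mul (mul_le_mul e1 le_rfl hq0 one_pos.le) e2 (Real.exp_pos _).le
          positivity
      _ = (1 - κ) ^ q := by ring

set_option maxHeartbeats 1000000 in

lemma nbp_key_ratio (ξ δ b α x : ℝ) (hξ1 : 0 < ξ) (hξ2 : ξ < 1/2) (hδ1 : 0 < δ) (hδ2 : δ < 1)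
    (hb : 1/2 < b) (hα1 : 0 < α) (hα2 : α < 1)
    (hx : (b + 1/2) * (1 - ξ) ^ α / (α * (ξ * δ) ^ (b + 1/2) * (1/2 - ξ))
          < Real.exp (ξ * (1 - δ) * x^2 / 2)) :
    (1/2 : ℝ) < (∫ κ in (0:ℝ)..1, κ ^ (b - 1/2) * (1 - κ) ^ α * Real.exp (-κ * x^2 / 2)) /
          (∫ κ in (0:ℝ)..1, κ ^ (b - 1/2) * (1 - κ) ^ (α - 1) * Real.exp (-κ * x^2 / 2)) := by
  set p := b - 1/2 with hpdef
  have hp : 0 < p := by simp [hpdef]; linarith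
  set w : ℝ → ℝ := fun κ => κ ^ p * (1 - κ) ^ (α - 1) * Real.exp (-κ * x^2 / 2) with hwdef
  set g : ℝ → ℝ := fun κ => κ ^ p * (1 - κ) ^ α * Real.exp (-κ * x^2 / 2) with hgdef
  have hwint : IntervalIntegrable w MeasureTheory.volume 0 1 :=
    nbp_aux_integrable hp.le (by linarith) x
  have hgint : IntervalIntegrable g MeasureTheory.volume 0 1 :=
    nbp_aux_integrable hp.le (by linarith) x
  have hξδ : 0 < ξ * δ := mul_pos hξ1 hδ1
  have hξδξ : ξ * δ < ξ := by nlinarith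
  have hξ1' : ξ < 1 := by linarith
  -- nonnegativity of w and g
  have hwnn : ∀ κ ∈ Set.Icc (0:ℝ) 1, 0 ≤ w κ := by
    intro κ hκ
    have h0 : (0:ℝ) ≤ κ := hκ.1
    have h1 : (0:ℝ) ≤ 1 - κ := by linarith [hκ.2]
    simp only [hwdef]
    positivity
  have hgnn : ∀ κ ∈ Set.Icc (ξ:ℝ) 1, 0 ≤ g κ := by
    intro κ hκ
    have h0 : (0:ℝ) ≤ κ := le_trans hξ1.le hκ.1
    have : (0:ℝ) ≤ 1 - κ := by linarith [hκ.2]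
    simp only [hgdef]
    positivity
  -- split integrals
  have hsub : ∀ u v : ℝ, 0 ≤ u → u ≤ 1 → 0 ≤ v → v ≤ 1 → Set.uIcc u v ⊆ Set.uIcc (0:ℝ) 1 := by
    intro u v h1 h2 h3 h4
    apply Set.uIcc_subset_uIcc <;> rw [Set.mem_uIcc] <;> exact Or.inl ⟨by linarith, by linarith⟩
  have hwA : IntervalIntegrable w MeasureTheory.volume 0 ξ :=
    hwint.mono_set (hsub _ _ le_rfl zero_le_one hξ1.le (by linarith))
  have hwB : IntervalIntegrable w MeasureTheory.volume ξ 1 :=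
    hwint.mono_set (hsub _ _ hξ1.le (by linarith) zero_le_one le_rfl)
  have hwA1 : IntervalIntegrable w MeasureTheory.volume 0 (ξ*δ) :=
    hwint.mono_set (hsub _ _ le_rfl zero_le_one hξδ.le (by nlinarith))
  have hwA2 : IntervalIntegrable w MeasureTheory.volume (ξ*δ) ξ :=
    hwint.mono_set (hsub _ _ hξδ.le (by nlinarith) hξ1.le (by linarith))
  have hgA : IntervalIntegrable g MeasureTheory.volume 0 ξ :=
    hgint.mono_set (hsub _ _ le_rfl zero_le_one hξ1.le (by linarith))
  have hgB : IntervalIntegrable g MeasureTheory.volume ξ 1 :=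
    hgint.mono_set (hsub _ _ hξ1.le (by linarith) zero_le_one le_rfl)
  set A := ∫ κ in (0:ℝ)..ξ, w κ with hAdef
  set B := ∫ κ in (ξ:ℝ)..1, w κ with hBdef
  -- lower bound for A
  have hbp : b + 1/2 = p + 1 := by rw [hpdef]; ring
  have hAlb : Real.exp (-(ξ*δ) * x^2 / 2) * ((ξ*δ) ^ (b + 1/2) / (b + 1/2)) ≤ A := by
    have hsplit : A = (∫ κ in (0:ℝ)..(ξ*δ), w κ) + ∫ κ in (ξ*δ:ℝ)..ξ, w κ :=
      (intervalIntegral.integral_add_adjacent_intervals hwA1 hwA2).symm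
    have h2nn : 0 ≤ ∫ κ in (ξ*δ:ℝ)..ξ, w κ :=
      intervalIntegral.integral_nonneg hξδξ.le
        (fun u hu => hwnn u ⟨le_trans hξδ.le hu.1, by linarith [hu.2]⟩)
    have hlowint : IntervalIntegrable
        (fun κ : ℝ => κ ^ p * Real.exp (-(ξ*δ) * x^2 / 2)) MeasureTheory.volume 0 (ξ*δ) :=
      (intervalIntegral.intervalIntegrable_rpow' (by linarith)).mul_const _
    have hmono : (∫ κ in (0:ℝ)..(ξ*δ), κ ^ p * Real.exp (-(ξ*δ) * x^2 / 2))
        ≤ ∫ κ in (0:ℝ)..(ξ*δ), w κ := by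
      apply intervalIntegral.integral_mono_on hξδ.le hlowint hwA1
      intro u hu
      have hu0 : (0:ℝ) ≤ u := hu.1
      have hu1 : u ≤ ξ*δ := hu.2
      have h1κ : (0:ℝ) < 1 - u := by nlinarith
      have e1 : (1:ℝ) ≤ (1 - u) ^ (α - 1) :=
        Real.one_le_rpow_of_pos_of_le_one_of_nonpos h1κ (by linarith) (by linarith)
      have e2 : Real.exp (-(ξ*δ) * x^2 / 2) ≤ Real.exp (-u * x^2 / 2) := by
        apply Real.exp_le_exp.2
        have : (0:ℝ) ≤ x^2 := sq_nonneg x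
        nlinarith
      have hupnn : (0:ℝ) ≤ u ^ p := Real.rpow_nonneg hu0 p
      calc u ^ p * Real.exp (-(ξ*δ) * x^2 / 2)
          ≤ u ^ p * Real.exp (-u * x^2 / 2) := by
            exact mul_le_mul_of_nonneg_left e2 hupnn
        _ = u ^ p * 1 * Real.exp (-u * x^2 / 2) := by ring
        _ ≤ u ^ p * (1 - u) ^ (α - 1) * Real.exp (-u * x^2 / 2) := by
            apply mul_le_mul_of_nonneg_right _ (Real.exp_pos _).le
            exact mul_le_mul_of_nonneg_left e1 hupnn
    have hval : (∫ κ in (0:ℝ)..(ξ*δ), κ ^ p * Real.exp (-(ξ*δ) * x^2 / 2))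
        = Real.exp (-(ξ*δ) * x^2 / 2) * ((ξ*δ) ^ (b + 1/2) / (b + 1/2)) := by
      rw [intervalIntegral.integral_mul_const, integral_rpow (Or.inl (by linarith))]
      rw [hbp, Real.zero_rpow (by linarith)]
      ring
    rw [hval] at hmono
    linarith
  -- upper bound for B
  have hBub : B ≤ Real.exp (-ξ * x^2 / 2) * ((1 - ξ) ^ α / α) := by
    have hmajint0 : IntervalIntegrable (fun u : ℝ => u ^ (α - 1))
        MeasureTheory.volume 0 (1 - ξ) :=
      intervalIntegral.intervalIntegrable_rpow' (by linarith)
    have hmajint : IntervalIntegrable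
        (fun κ : ℝ => (1 - κ) ^ (α - 1) * Real.exp (-ξ * x^2 / 2))
        MeasureTheory.volume ξ 1 := by
      have := (hmajint0.comp_sub_left 1).mul_const (Real.exp (-ξ * x^2 / 2))
      simpa using this.symm
    have hmono : B ≤ ∫ κ in (ξ:ℝ)..1, (1 - κ) ^ (α - 1) * Real.exp (-ξ * x^2 / 2) := by
      apply intervalIntegral.integral_mono_on (by linarith) hwB hmajint
      intro u hu
      have hu0 : (0:ℝ) < u := lt_of_lt_of_le hξ1 hu.1
      have hu1 : u ≤ 1 := hu.2
      have h1κ : (0:ℝ) ≤ 1 - u := by linarith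
      have e1 : u ^ p ≤ 1 := Real.rpow_le_one hu0.le hu1 hp.le
      have e2 : Real.exp (-u * x^2 / 2) ≤ Real.exp (-ξ * x^2 / 2) := by
        apply Real.exp_le_exp.2
        have : (0:ℝ) ≤ x^2 := sq_nonneg x
        nlinarith [hu.1]
      have hnn : (0:ℝ) ≤ (1 - u) ^ (α - 1) := Real.rpow_nonneg h1κ _
      calc u ^ p * (1 - u) ^ (α - 1) * Real.exp (-u * x^2 / 2)
          ≤ 1 * (1 - u) ^ (α - 1) * Real.exp (-ξ * x^2 / 2) := by
            apply mul_le_mul (mul_le_mul e1 le_rfl hnn zero_le_one) e2 (Real.exp_pos _).le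
            positivity
        _ = (1 - u) ^ (α - 1) * Real.exp (-ξ * x^2 / 2) := by ring
    have hval : (∫ κ in (ξ:ℝ)..1, (1 - κ) ^ (α - 1) * Real.exp (-ξ * x^2 / 2))
        = Real.exp (-ξ * x^2 / 2) * ((1 - ξ) ^ α / α) := by
      rw [intervalIntegral.integral_mul_const]
      have hcmp : (∫ κ in (ξ:ℝ)..1, (1 - κ) ^ (α - 1))
          = ∫ u in (0:ℝ)..(1 - ξ), u ^ (α - 1) := by
        have := intervalIntegral.integral_comp_sub_left (a := ξ) (b := 1)
          (fun u : ℝ => u ^ (α - 1)) 1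
        simpa using this
      rw [hcmp, integral_rpow (Or.inl (by linarith)), Real.zero_rpow (by linarith)]
      have : α - 1 + 1 = α := by ring
      rw [this]
      ring
    linarith [hval ▸ hmono]
  -- the exponential inequality
  have hX : Real.exp (-ξ * x^2 / 2) * ((1 - ξ) ^ α / α)
      < (1/2 - ξ) * (Real.exp (-(ξ*δ) * x^2 / 2) * ((ξ*δ) ^ (b + 1/2) / (b + 1/2))) := by
    have hD : (0:ℝ) < (ξ*δ) ^ (b + 1/2) := Real.rpow_pos_of_pos hξδ _
    have hexp : Real.exp (-(ξ*δ) * x^2 / 2)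
        = Real.exp (-ξ * x^2 / 2) * Real.exp (ξ * (1 - δ) * x^2 / 2) := by
      rw [← Real.exp_add]
      congr 1
      ring
    rw [hexp]
    have hE1 : (0:ℝ) < Real.exp (-ξ * x^2 / 2) := Real.exp_pos _
    have key : (1 - ξ) ^ α / α
        < (1/2 - ξ) * (Real.exp (ξ * (1 - δ) * x^2 / 2) * ((ξ*δ) ^ (b + 1/2) / (b + 1/2))) := by
      have hc : (0:ℝ) < (1/2 - ξ) * ((ξ*δ) ^ (b + 1/2) / (b + 1/2)) := by
        apply mul_pos (by linarith)
        positivity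
      have hTne : (ξ*δ) ^ (b + 1/2) ≠ 0 := hD.ne'
      have hsne : (1/2 - ξ) ≠ 0 := by intro h; rw [sub_eq_zero] at h; linarith
      have hBne : b + 1/2 ≠ 0 := by linarith
      have hαne : α ≠ 0 := hα1.ne'
      have := (mul_lt_mul_of_pos_left hx hc)
      have heq : (1/2 - ξ) * ((ξ*δ) ^ (b + 1/2) / (b + 1/2)) *
            ((b + 1/2) * (1 - ξ) ^ α / (α * (ξ * δ) ^ (b + 1/2) * (1/2 - ξ)))
          = (1 - ξ) ^ α / α := by
        generalize (1:ℝ)/2 - ξ = s at hsne hc ⊢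
        generalize (1 - ξ) ^ α = N
        generalize hT : (ξ*δ) ^ (b + 1/2) = T at hTne ⊢
        generalize hB : b + 1/2 = B' at hBne ⊢
        field_simp
      calc (1 - ξ) ^ α / α
          = (1/2 - ξ) * ((ξ*δ) ^ (b + 1/2) / (b + 1/2)) *
            ((b + 1/2) * (1 - ξ) ^ α / (α * (ξ * δ) ^ (b + 1/2) * (1/2 - ξ))) := heq.symm
        _ < (1/2 - ξ) * ((ξ*δ) ^ (b + 1/2) / (b + 1/2)) * Real.exp (ξ * (1 - δ) * x^2 / 2) :=
            this
        _ = (1/2 - ξ) * (Real.exp (ξ * (1 - δ) * x^2 / 2) * ((ξ*δ) ^ (b + 1/2) / (b + 1/2))) := by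
            ring
    calc Real.exp (-ξ * x^2 / 2) * ((1 - ξ) ^ α / α)
        < Real.exp (-ξ * x^2 / 2) *
          ((1/2 - ξ) * (Real.exp (ξ * (1 - δ) * x^2 / 2) * ((ξ*δ) ^ (b + 1/2) / (b + 1/2)))) :=
          mul_lt_mul_of_pos_left key hE1
      _ = (1/2 - ξ) * (Real.exp (-ξ * x^2 / 2) * Real.exp (ξ * (1 - δ) * x^2 / 2) *
          ((ξ*δ) ^ (b + 1/2) / (b + 1/2))) := by ring
  have hApos : 0 < A := by
    have : (0:ℝ) < Real.exp (-(ξ*δ) * x^2 / 2) * ((ξ*δ) ^ (b + 1/2) / (b + 1/2)) := by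
      have := Real.rpow_pos_of_pos hξδ (b + 1/2)
      positivity
    linarith
  have hBA : B < (1/2 - ξ) * A := by
    calc B ≤ Real.exp (-ξ * x^2 / 2) * ((1 - ξ) ^ α / α) := hBub
      _ < (1/2 - ξ) * (Real.exp (-(ξ*δ) * x^2 / 2) * ((ξ*δ) ^ (b + 1/2) / (b + 1/2))) := hX
      _ ≤ (1/2 - ξ) * A := by
          apply mul_le_mul_of_nonneg_left hAlb (by linarith)
  -- I1 lower bound
  have hI1 : (1 - ξ) * A ≤ ∫ κ in (0:ℝ)..1, g κ := by
    have hsplit : (∫ κ in (0:ℝ)..1, g κ) = (∫ κ in (0:ℝ)..ξ, g κ) + ∫ κ in (ξ:ℝ)..1, g κ :=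
      (intervalIntegral.integral_add_adjacent_intervals hgA hgB).symm
    have h2nn : 0 ≤ ∫ κ in (ξ:ℝ)..1, g κ :=
      intervalIntegral.integral_nonneg (by linarith) hgnn
    have hmono : (∫ κ in (0:ℝ)..ξ, (1 - ξ) * w κ) ≤ ∫ κ in (0:ℝ)..ξ, g κ := by
      apply intervalIntegral.integral_mono_on hξ1.le (hwA.const_mul _) hgA
      intro u hu
      have hu0 : (0:ℝ) ≤ u := hu.1
      have h1κ : (0:ℝ) < 1 - u := by linarith [hu.2]
      have hrw : (1 - u) ^ α = (1 - u) ^ (α - 1) * (1 - u) := by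
        nth_rewrite 1 [show α = (α - 1) + 1 by ring]
        rw [Real.rpow_add h1κ, Real.rpow_one]
      have hnn : (0:ℝ) ≤ u ^ p * (1 - u) ^ (α - 1) * Real.exp (-u * x^2 / 2) := by
        have := Real.rpow_nonneg hu0 p
        have := Real.rpow_nonneg h1κ.le (α - 1)
        positivity
      show (1 - ξ) * (u ^ p * (1 - u) ^ (α - 1) * Real.exp (-u * x^2 / 2))
          ≤ u ^ p * (1 - u) ^ α * Real.exp (-u * x^2 / 2)
      rw [hrw]
      calc (1 - ξ) * (u ^ p * (1 - u) ^ (α - 1) * Real.exp (-u * x^2 / 2))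
          ≤ (1 - u) * (u ^ p * (1 - u) ^ (α - 1) * Real.exp (-u * x^2 / 2)) := by
            apply mul_le_mul_of_nonneg_right _ hnn
            linarith [hu.2]
        _ = u ^ p * ((1 - u) ^ (α - 1) * (1 - u)) * Real.exp (-u * x^2 / 2) := by ring
    rw [intervalIntegral.integral_const_mul] at hmono
    rw [hsplit]
    linarith
  have hI0 : (∫ κ in (0:ℝ)..1, w κ) = A + B := by
    rw [hAdef, hBdef, intervalIntegral.integral_add_adjacent_intervals hwA hwB]
  have hI0pos : 0 < ∫ κ in (0:ℝ)..1, w κ := by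
    rw [hI0]
    have hBnn : 0 ≤ B := intervalIntegral.integral_nonneg (by linarith) (fun u hu => hwnn u ⟨le_trans hξ1.le hu.1, hu.2⟩)
    linarith
  rw [lt_div_iff₀ hI0pos, hI0]
  have hfact : 0 < (1/2 - ξ) * A := mul_pos (by linarith) hApos
  nlinarith [hI1]

/-- Asymptotic lower bound on the Type I error of the NBP thresholding rule. -/
theorem stmt_14 (ξ δ b : ℝ) (hξ : ξ ∈ Set.Ioo (0:ℝ) (1/2)) (hδ : δ ∈ Set.Ioo (0:ℝ) 1)
    (hb : b ∈ Set.Ioi (1/2 : ℝ)) (a : ℕ → ℝ) (ha : ∀ n, a n ∈ Set.Ioo (0:ℝ) 1)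
    (ha0 : Tendsto a atTop (nhds 0)) :
    ∀ᶠ n in atTop,
      ENNReal.ofReal (2 * (1 -
        (∫ t in Set.Iic (Real.sqrt ((2 / (ξ * (1 - δ))) *
            Real.log ((b + 1/2) * (1 - ξ) ^ (a n) /
              (a n * (ξ * δ) ^ (b + 1/2) * (1/2 - ξ))))),
          (Real.sqrt (2 * π))⁻¹ * Real.exp (-t^2 / 2))))
      ≤ (gaussianReal 0 1) {x : ℝ |
          (1/2 : ℝ) <
            (∫ κ in (0:ℝ)..1, κ ^ (b - 1/2) * (1 - κ) ^ (a n) * Real.exp (-κ * x^2 / 2)) /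
              (∫ κ in (0:ℝ)..1,
                κ ^ (b - 1/2) * (1 - κ) ^ (a n - 1) * Real.exp (-κ * x^2 / 2))} := by
  obtain ⟨hξ1, hξ2⟩ := hξ
  obtain ⟨hδ1, hδ2⟩ := hδ
  have hb' : 1/2 < b := hb
  have hξδ : (0:ℝ) < ξ * δ := mul_pos hξ1 hδ1
  have hT : (0:ℝ) < (ξ * δ) ^ (b + 1/2) := Real.rpow_pos_of_pos hξδ _
  have hs : (0:ℝ) < 1/2 - ξ := by linarith
  set K := (b + 1/2) * (1 - ξ) / ((ξ * δ) ^ (b + 1/2) * (1/2 - ξ)) with hK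
  have hKpos : 0 < K := by
    apply div_pos (by nlinarith) (by positivity)
  filter_upwards [ha0.eventually_lt_const hKpos] with n hn
  set α := a n with hα
  obtain ⟨hα1, hα2⟩ := ha n
  set M := (b + 1/2) * (1 - ξ) ^ α / (α * (ξ * δ) ^ (b + 1/2) * (1/2 - ξ)) with hM
  have hM1 : 1 < M := by
    have hr : (1 - ξ) ≤ (1 - ξ) ^ α := by
      have := Real.rpow_le_rpow_of_exponent_ge (x := 1 - ξ) (by linarith) (by linarith) hα2.le
      rwa [Real.rpow_one] at this
    have hKα : K / α ≤ M := by
      rw [hK, hM, div_div]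
      rw [show (ξ * δ) ^ (b + 1/2) * (1/2 - ξ) * α = α * (ξ * δ) ^ (b + 1/2) * (1/2 - ξ) by ring]
      gcongr
    have : 1 < K / α := (one_lt_div hα1).2 hn
    linarith
  have hMpos : 0 < M := lt_trans one_pos hM1
  have hξ1δ : (0:ℝ) < ξ * (1 - δ) := mul_pos hξ1 (by linarith)
  have hlog : 0 < Real.log M := Real.log_pos hM1
  set c := Real.sqrt ((2 / (ξ * (1 - δ))) * Real.log M) with hc
  have ht0 : 0 ≤ (2 / (ξ * (1 - δ))) * Real.log M := by positivity
  have hc0 : 0 ≤ c := Real.sqrt_nonneg _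
  have hcsq : c ^ 2 = (2 / (ξ * (1 - δ))) * Real.log M := Real.sq_sqrt ht0
  have hclog : ξ * (1 - δ) * c ^ 2 / 2 = Real.log M := by
    rw [hcsq]; field_simp
  -- the subset inclusion
  have hsubset : Set.Iio (-c) ∪ Set.Ioi c ⊆ {x : ℝ |
      (1/2 : ℝ) <
        (∫ κ in (0:ℝ)..1, κ ^ (b - 1/2) * (1 - κ) ^ α * Real.exp (-κ * x^2 / 2)) /
          (∫ κ in (0:ℝ)..1, κ ^ (b - 1/2) * (1 - κ) ^ (α - 1) * Real.exp (-κ * x^2 / 2))} := by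
    intro x hx
    have hxsq : c ^ 2 < x ^ 2 := by
      have habs : c < |x| := by
        rcases hx with hx | hx
        · rw [Set.mem_Iio] at hx
          exact lt_of_lt_of_le (by linarith : c < -x) (neg_le_abs x)
        · exact lt_of_lt_of_le hx (le_abs_self x)
      calc c ^ 2 < |x| ^ 2 := by
            apply pow_lt_pow_left₀ habs hc0 (by norm_num)
        _ = x ^ 2 := sq_abs x
    apply nbp_key_ratio ξ δ b α x hξ1 hξ2 hδ1 hδ2 hb' hα1 hα2
    rw [← hM]
    calc M = Real.exp (Real.log M) := (Real.exp_log hMpos).symm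
      _ < Real.exp (ξ * (1 - δ) * x^2 / 2) := by
          apply Real.exp_lt_exp.2
          rw [← hclog]
          have : ξ * (1 - δ) * c ^ 2 < ξ * (1 - δ) * x ^ 2 :=
            mul_lt_mul_of_pos_left hxsq hξ1δ
          linarith
  -- gaussian measure computation
  have hv : (1 : NNReal) ≠ 0 := one_ne_zero
  have hpdf : ∀ t : ℝ, (Real.sqrt (2 * π))⁻¹ * Real.exp (-t^2 / 2) = gaussianPDFReal 0 1 t := by
    intro t
    simp [gaussianPDFReal]
  have hInt : Integrable (gaussianPDFReal 0 1) := integrable_gaussianPDFReal 0 1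
  have htot : ∫ x, gaussianPDFReal 0 1 x = 1 := integral_gaussianPDFReal_eq_one 0 hv
  have hIicIoi : (∫ x in Set.Iic c, gaussianPDFReal 0 1 x)
      + ∫ x in Set.Ioi c, gaussianPDFReal 0 1 x = 1 := by
    have h := MeasureTheory.integral_add_compl (measurableSet_Iic (a := c)) hInt
    rw [Set.compl_Iic] at h
    rw [h, htot]
  have heven : ∀ x : ℝ, gaussianPDFReal 0 1 (-x) = gaussianPDFReal 0 1 x := by
    intro x
    simp [gaussianPDFReal]
  have hsym : ∫ x in Set.Iic (-c), gaussianPDFReal 0 1 x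
      = ∫ x in Set.Ioi c, gaussianPDFReal 0 1 x := by
    rw [← integral_comp_neg_Ioi]
    simp_rw [heven]
  have hIio : ∫ x in Set.Iio (-c), gaussianPDFReal 0 1 x
      = ∫ x in Set.Iic (-c), gaussianPDFReal 0 1 x :=
    MeasureTheory.setIntegral_congr_set Iio_ae_eq_Iic
  have hdisj : Disjoint (Set.Iio (-c)) (Set.Ioi c) :=
    (Set.Iic_disjoint_Ioi (by linarith)).mono_left Set.Iio_subset_Iic_self
  have hS0 : (gaussianReal 0 1) (Set.Iio (-c) ∪ Set.Ioi c)
      = ENNReal.ofReal ((∫ x in Set.Iio (-c), gaussianPDFReal 0 1 x)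
          + ∫ x in Set.Ioi c, gaussianPDFReal 0 1 x) := by
    rw [gaussianReal_apply_eq_integral 0 hv,
      MeasureTheory.setIntegral_union hdisj measurableSet_Ioi
        hInt.integrableOn hInt.integrableOn]
  calc ENNReal.ofReal (2 * (1 - ∫ t in Set.Iic c, (Real.sqrt (2 * π))⁻¹ * Real.exp (-t^2 / 2)))
      = (gaussianReal 0 1) (Set.Iio (-c) ∪ Set.Ioi c) := by
        rw [hS0]
        congr 1
        simp_rw [hpdf]
        rw [hIio, hsym]
        linarith
    _ ≤ _ := measure_mono hsubset
end

section
/- Let b ∈ (1/2,∞) be fixed. For the posterior density π(κ|x) ∝ e^{-κx²/2} κ^{b-1/2}(1-κ)^{a-1} on (0,1), the posterior expectation E(1-κ|x), viewed as a function of the hyperparameter a ∈ (0,∞) with x fixed, is nondecreasing in a. -/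
set_option maxHeartbeats 1000000

open Real MeasureTheory Set

noncomputable def Fk (b x p κ : ℝ) : ℝ :=
  κ ^ (b - 1/2) * (1 - κ) ^ p * Real.exp (-κ * x^2 / 2)

lemma Fk_intervalIntegrable (b x p : ℝ) (hb : 1/2 < b) (hp : -1 < p) :
    IntervalIntegrable (Fk b x p) volume 0 1 := by
  have h1 : IntervalIntegrable (fun κ : ℝ => (1 - κ) ^ p) volume 0 1 := by
    have h0 : IntervalIntegrable (fun t : ℝ => t ^ p) volume 0 1 := intervalIntegral.intervalIntegrable_rpow' hp
    have h2 := h0.comp_sub_left 1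
    simpa using h2.symm
  have hc : ContinuousOn (fun κ : ℝ => κ ^ (b - 1/2) * Real.exp (-κ * x^2 / 2))
      (Set.uIcc (0:ℝ) 1) := by
    apply ContinuousOn.mul
    · intro κ _
      exact (Real.continuousAt_rpow_const κ _ (Or.inr (by linarith))).continuousWithinAt
    · exact (Real.continuous_exp.comp (by continuity)).continuousOn
  have h2 := h1.mul_continuousOn hc
  have heq : Fk b x p = fun κ => (1 - κ) ^ p * (κ ^ (b - 1/2) * Real.exp (-κ * x^2 / 2)) := by
    funext κ; unfold Fk; ring
  rw [heq]; exact h2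

lemma Fk_integral_pos (b x p : ℝ) (hb : 1/2 < b) (hp : -1 < p) :
    0 < ∫ κ in (0:ℝ)..1, Fk b x p κ := by
  apply intervalIntegral.intervalIntegral_pos_of_pos_on (Fk_intervalIntegrable b x p hb hp)
    _ one_pos
  intro κ hκ
  have h0 : (0:ℝ) < κ := hκ.1
  have h1 : (0:ℝ) < 1 - κ := by linarith [hκ.2]
  unfold Fk; positivity

lemma Fk_pointwise (b x a₁ a₂ s t : ℝ) (h1 : 0 < a₁) (h12 : a₁ ≤ a₂)
    (hs : s ∈ Ioo (0:ℝ) 1) (ht : t ∈ Ioo (0:ℝ) 1) :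
    Fk b x a₁ s * Fk b x (a₂-1) t + Fk b x (a₂-1) s * Fk b x a₁ t ≤
    Fk b x a₂ s * Fk b x (a₁-1) t + Fk b x (a₁-1) s * Fk b x a₂ t := by
  set δ := a₂ - a₁ with hδ
  have hδ0 : 0 ≤ δ := by rw [hδ]; linarith
  have hu : 0 < 1 - s := by linarith [hs.2]
  have hv : 0 < 1 - t := by linarith [ht.2]
  have e1 : ∀ w : ℝ, 0 < w → w ^ a₁ = w ^ (a₁-1) * w := by
    intro w hw
    have h := Real.rpow_add hw (a₁-1) 1
    rw [Real.rpow_one, show a₁ - 1 + 1 = a₁ by ring] at h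
    exact h
  have e2 : ∀ w : ℝ, 0 < w → w ^ a₂ = w ^ (a₁-1) * w * w ^ δ := by
    intro w hw
    have h := Real.rpow_add hw (a₁-1+1) δ
    rw [Real.rpow_add hw (a₁-1) 1, Real.rpow_one, show a₁ - 1 + 1 + δ = a₂ by rw [hδ]; ring] at h
    exact h
  have e3 : ∀ w : ℝ, 0 < w → w ^ (a₂-1) = w ^ (a₁-1) * w ^ δ := by
    intro w hw
    have h := Real.rpow_add hw (a₁-1) δ
    rw [show a₁ - 1 + δ = a₂ - 1 by rw [hδ]; ring] at h
    exact h
  have key0 : (1-s) * (1-t) ^ δ + (1-t) * (1-s) ^ δ ≤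
      (1-s) * (1-s) ^ δ + (1-t) * (1-t) ^ δ := by
    rcases le_total (1-s) (1-t) with h | h
    · have h' := Real.rpow_le_rpow hu.le h hδ0
      nlinarith
    · have h' := Real.rpow_le_rpow hv.le h hδ0
      nlinarith
  have hC : 0 ≤ (s ^ (b-1/2) * Real.exp (-s * x^2 / 2)) *
      (t ^ (b-1/2) * Real.exp (-t * x^2 / 2)) * ((1-s) ^ (a₁-1) * (1-t) ^ (a₁-1)) := by
    rcases hs with ⟨hs0, _⟩; rcases ht with ⟨ht0, _⟩
    positivity
  unfold Fk
  rw [e1 _ hu, e1 _ hv, e2 _ hu, e2 _ hv, e3 _ hu, e3 _ hv]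
  calc s ^ (b - 1/2) * ((1-s) ^ (a₁-1) * (1-s)) * Real.exp (-s * x^2 / 2) *
        (t ^ (b - 1/2) * ((1-t) ^ (a₁-1) * (1-t) ^ δ) * Real.exp (-t * x^2 / 2)) +
      s ^ (b - 1/2) * ((1-s) ^ (a₁-1) * (1-s) ^ δ) * Real.exp (-s * x^2 / 2) *
        (t ^ (b - 1/2) * ((1-t) ^ (a₁-1) * (1-t)) * Real.exp (-t * x^2 / 2))
      = (s ^ (b-1/2) * Real.exp (-s * x^2 / 2)) * (t ^ (b-1/2) * Real.exp (-t * x^2 / 2)) *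
        ((1-s) ^ (a₁-1) * (1-t) ^ (a₁-1)) * ((1-s) * (1-t) ^ δ + (1-t) * (1-s) ^ δ) := by ring
    _ ≤ (s ^ (b-1/2) * Real.exp (-s * x^2 / 2)) * (t ^ (b-1/2) * Real.exp (-t * x^2 / 2)) *
        ((1-s) ^ (a₁-1) * (1-t) ^ (a₁-1)) * ((1-s) * (1-s) ^ δ + (1-t) * (1-t) ^ δ) :=
      mul_le_mul_of_nonneg_left key0 hC
    _ = s ^ (b - 1/2) * ((1-s) ^ (a₁-1) * (1-s) * (1-s) ^ δ) * Real.exp (-s * x^2 / 2) *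
        (t ^ (b - 1/2) * (1-t) ^ (a₁-1) * Real.exp (-t * x^2 / 2)) +
      s ^ (b - 1/2) * (1-s) ^ (a₁-1) * Real.exp (-s * x^2 / 2) *
        (t ^ (b - 1/2) * ((1-t) ^ (a₁-1) * (1-t) * (1-t) ^ δ) * Real.exp (-t * x^2 / 2)) := by
      ring

lemma Fk_key (b x a₁ a₂ : ℝ) (hb : 1/2 < b) (h1 : 0 < a₁) (h12 : a₁ ≤ a₂) :
    (∫ κ in (0:ℝ)..1, Fk b x a₁ κ) * (∫ κ in (0:ℝ)..1, Fk b x (a₂-1) κ) ≤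
    (∫ κ in (0:ℝ)..1, Fk b x a₂ κ) * (∫ κ in (0:ℝ)..1, Fk b x (a₁-1) κ) := by
  have hconv : ∀ p : ℝ, (∫ κ in (0:ℝ)..1, Fk b x p κ) = ∫ κ in Ioo (0:ℝ) 1, Fk b x p κ := by
    intro p
    rw [intervalIntegral.integral_of_le zero_le_one, MeasureTheory.integral_Ioc_eq_integral_Ioo]
  have hI : ∀ p : ℝ, -1 < p → IntegrableOn (Fk b x p) (Ioo (0:ℝ) 1) volume := by
    intro p hp
    exact ((Fk_intervalIntegrable b x p hb hp).1).mono_set Ioo_subset_Ioc_self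
  have ha1' : (-1:ℝ) < a₁ - 1 := by linarith
  have ha2' : (-1:ℝ) < a₂ - 1 := by linarith
  have ha1 : (-1:ℝ) < a₁ := by linarith
  have ha2 : (-1:ℝ) < a₂ := by linarith
  set A : ℝ → ℝ := fun p => ∫ κ in Ioo (0:ℝ) 1, Fk b x p κ with hA
  -- inner nonnegativity
  have inner : ∀ s ∈ Ioo (0:ℝ) 1,
      0 ≤ Fk b x a₂ s * A (a₁-1) + Fk b x (a₁-1) s * A a₂ -
        (Fk b x a₁ s * A (a₂-1) + Fk b x (a₂-1) s * A a₁) := by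
    intro s hs
    have hrepr : Fk b x a₂ s * A (a₁-1) + Fk b x (a₁-1) s * A a₂ -
        (Fk b x a₁ s * A (a₂-1) + Fk b x (a₂-1) s * A a₁) =
        ∫ t in Ioo (0:ℝ) 1,
          (Fk b x a₂ s * Fk b x (a₁-1) t + Fk b x (a₁-1) s * Fk b x a₂ t -
            (Fk b x a₁ s * Fk b x (a₂-1) t + Fk b x (a₂-1) s * Fk b x a₁ t)) := by
      have J1 : Integrable
          (fun t => Fk b x a₂ s * Fk b x (a₁-1) t + Fk b x (a₁-1) s * Fk b x a₂ t)
          (volume.restrict (Ioo (0:ℝ) 1)) :=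
        ((hI _ ha1').const_mul _).add ((hI _ ha2).const_mul _)
      have J2 : Integrable
          (fun t => Fk b x a₁ s * Fk b x (a₂-1) t + Fk b x (a₂-1) s * Fk b x a₁ t)
          (volume.restrict (Ioo (0:ℝ) 1)) :=
        ((hI _ ha2').const_mul _).add ((hI _ ha1).const_mul _)
      rw [MeasureTheory.integral_sub J1 J2,
        MeasureTheory.integral_add ((hI _ ha1').const_mul _) ((hI _ ha2).const_mul _),
        MeasureTheory.integral_add ((hI _ ha2').const_mul _) ((hI _ ha1).const_mul _),
        MeasureTheory.integral_const_mul, MeasureTheory.integral_const_mul,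
        MeasureTheory.integral_const_mul, MeasureTheory.integral_const_mul]
    rw [hrepr]
    apply MeasureTheory.setIntegral_nonneg measurableSet_Ioo
    intro t ht
    have := Fk_pointwise b x a₁ a₂ s t h1 h12 hs ht
    linarith
  have outer : 0 ≤ ∫ s in Ioo (0:ℝ) 1,
      (Fk b x a₂ s * A (a₁-1) + Fk b x (a₁-1) s * A a₂ -
        (Fk b x a₁ s * A (a₂-1) + Fk b x (a₂-1) s * A a₁)) :=
    MeasureTheory.setIntegral_nonneg measurableSet_Ioo inner
  have houter : (∫ s in Ioo (0:ℝ) 1,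
      (Fk b x a₂ s * A (a₁-1) + Fk b x (a₁-1) s * A a₂ -
        (Fk b x a₁ s * A (a₂-1) + Fk b x (a₂-1) s * A a₁))) =
      A a₂ * A (a₁-1) + A (a₁-1) * A a₂ - (A a₁ * A (a₂-1) + A (a₂-1) * A a₁) := by
    have K1 : Integrable
        (fun s => Fk b x a₂ s * A (a₁-1) + Fk b x (a₁-1) s * A a₂)
        (volume.restrict (Ioo (0:ℝ) 1)) :=
      ((hI _ ha2).mul_const _).add ((hI _ ha1').mul_const _)
    have K2 : Integrable
        (fun s => Fk b x a₁ s * A (a₂-1) + Fk b x (a₂-1) s * A a₁)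
        (volume.restrict (Ioo (0:ℝ) 1)) :=
      ((hI _ ha1).mul_const _).add ((hI _ ha2').mul_const _)
    rw [MeasureTheory.integral_sub K1 K2,
      MeasureTheory.integral_add ((hI _ ha2).mul_const _) ((hI _ ha1').mul_const _),
      MeasureTheory.integral_add ((hI _ ha1).mul_const _) ((hI _ ha2').mul_const _),
      MeasureTheory.integral_mul_const, MeasureTheory.integral_mul_const,
      MeasureTheory.integral_mul_const, MeasureTheory.integral_mul_const]
  rw [houter] at outer
  rw [hconv, hconv, hconv, hconv]
  show A a₁ * A (a₂-1) ≤ A a₂ * A (a₁-1)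
  linarith [outer]

/-- The posterior expectation E(1-κ|x;a) is nondecreasing in the hyperparameter a. -/
theorem stmt_17 (b x : ℝ) (hb : b ∈ Set.Ioi (1/2 : ℝ)) :
    ∀ a₁ a₂ : ℝ, 0 < a₁ → a₁ ≤ a₂ →
      (∫ κ in (0:ℝ)..1, κ ^ (b - 1/2) * (1 - κ) ^ a₁ * Real.exp (-κ * x^2 / 2)) /
          (∫ κ in (0:ℝ)..1, κ ^ (b - 1/2) * (1 - κ) ^ (a₁ - 1) * Real.exp (-κ * x^2 / 2))
        ≤ (∫ κ in (0:ℝ)..1, κ ^ (b - 1/2) * (1 - κ) ^ a₂ * Real.exp (-κ * x^2 / 2)) /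
            (∫ κ in (0:ℝ)..1,
              κ ^ (b - 1/2) * (1 - κ) ^ (a₂ - 1) * Real.exp (-κ * x^2 / 2)) := by
  intro a₁ a₂ h1 h12
  have hb' : 1/2 < b := hb
  show (∫ κ in (0:ℝ)..1, Fk b x a₁ κ) / (∫ κ in (0:ℝ)..1, Fk b x (a₁-1) κ) ≤
      (∫ κ in (0:ℝ)..1, Fk b x a₂ κ) / (∫ κ in (0:ℝ)..1, Fk b x (a₂-1) κ)
  rw [div_le_div_iff₀ (Fk_integral_pos b x (a₁-1) hb' (by linarith))
    (Fk_integral_pos b x (a₂-1) hb' (by linarith))]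
  exact Fk_key b x a₁ a₂ hb' h1 h12
end

section
/- Fix ε ∈ (0,1), b ∈ (1/2,∞), and x ∈ ℝ. Then with π(κ|x; aₙ) ∝ e^{-κx²/2} κ^{b-1/2}(1-κ)^{aₙ-1} on (0,1), for any sequence aₙ ∈ (0,1) with aₙ → 0, the posterior probabilities satisfy Pr(κ ≥ ε | x; aₙ) → 1 as n → ∞. -/
open Real Filter intervalIntegral

lemma aux18 (ε b x t : ℝ) (hε0 : 0 < ε) (hε1 : ε < 1) (hb : 1/2 < b)
    (ht0 : 0 < t) (ht1 : t < 1) :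
    IntervalIntegrable (fun κ => κ ^ (b - 1/2) * (1 - κ) ^ (t - 1) * Real.exp (-κ * x^2 / 2)) MeasureTheory.volume 0 ε ∧
    IntervalIntegrable (fun κ => κ ^ (b - 1/2) * (1 - κ) ^ (t - 1) * Real.exp (-κ * x^2 / 2)) MeasureTheory.volume ε 1 ∧
    (0 ≤ ∫ κ in (0:ℝ)..ε, κ ^ (b - 1/2) * (1 - κ) ^ (t - 1) * Real.exp (-κ * x^2 / 2)) ∧
    (∫ κ in (0:ℝ)..ε, κ ^ (b - 1/2) * (1 - κ) ^ (t - 1) * Real.exp (-κ * x^2 / 2)) ≤ ε / (1 - ε) ∧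
    ε ^ (b - 1/2) * Real.exp (-x^2/2) * ((1 - ε) ^ t / t) ≤
      ∫ κ in ε..1, κ ^ (b - 1/2) * (1 - κ) ^ (t - 1) * Real.exp (-κ * x^2 / 2) := by
  have hp : 0 < b - 1/2 := by linarith
  set f : ℝ → ℝ := fun κ => κ ^ (b - 1/2) * (1 - κ) ^ (t - 1) * Real.exp (-κ * x^2 / 2) with hf
  -- continuity on [0, ε]
  have hc1 : Continuous fun κ : ℝ => κ ^ (b - 1/2) :=
    continuous_iff_continuousAt.mpr fun κ => Real.continuousAt_rpow_const _ _ (Or.inr hp.le)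
  have hcont : ContinuousOn f (Set.Icc 0 ε) := by
    apply ContinuousOn.mul
    apply ContinuousOn.mul hc1.continuousOn
    · intro κ hκ
      have h1κ : (0:ℝ) < 1 - κ := by linarith [hκ.2]
      exact ((Real.continuousAt_rpow_const _ _ (Or.inl h1κ.ne')).comp
        (continuous_const.sub continuous_id).continuousAt).continuousWithinAt
    · fun_prop
  have hI1 : IntervalIntegrable f MeasureTheory.volume 0 ε := by
    rw [show Set.Icc (0:ℝ) ε = Set.uIcc 0 ε from (Set.uIcc_of_le hε0.le).symm] at hcont
    exact hcont.intervalIntegrable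
  -- integrability on [ε,1] : dominated by (1-κ)^(t-1)
  have hg : IntervalIntegrable (fun κ : ℝ => (1 - κ) ^ (t - 1)) MeasureTheory.volume ε 1 := by
    have := (intervalIntegral.intervalIntegrable_rpow' (a := 0) (b := 1 - ε)
      (r := t - 1) (by linarith)).comp_sub_left 1
    simpa using this.symm
  have hmeas : MeasureTheory.AEStronglyMeasurable f
      (MeasureTheory.volume.restrict (Set.uIoc ε 1)) := by
    apply Measurable.aestronglyMeasurable
    have : Measurable f := by fun_prop
    exact this
  have hfnonneg : ∀ κ : ℝ, 0 ≤ κ → κ ≤ 1 → 0 ≤ f κ := by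
    intro κ hκ0 hκ1
    have h1 := Real.rpow_nonneg hκ0 (b - 1/2)
    have h2 := Real.rpow_nonneg (by linarith : (0:ℝ) ≤ 1 - κ) (t - 1)
    positivity
  have hI2 : IntervalIntegrable f MeasureTheory.volume ε 1 := by
    apply hg.mono_fun hmeas
    filter_upwards [MeasureTheory.ae_restrict_mem measurableSet_uIoc] with κ hκ
    rw [Set.uIoc_of_le hε1.le] at hκ
    have h0κ : 0 ≤ κ := le_trans hε0.le hκ.1.le
    rw [Real.norm_eq_abs, Real.norm_eq_abs, abs_of_nonneg (hfnonneg κ h0κ hκ.2),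
      abs_of_nonneg (Real.rpow_nonneg (by linarith [hκ.2] : (0:ℝ) ≤ 1 - κ) _)]
    calc f κ ≤ 1 * (1 - κ) ^ (t - 1) * 1 := by
          apply mul_le_mul _ (Real.exp_le_one_iff.mpr (by nlinarith [sq_nonneg x]))
            (Real.exp_pos _).le
            (mul_nonneg zero_le_one (Real.rpow_nonneg (by linarith [hκ.2]) _))
          apply mul_le_mul _ le_rfl (Real.rpow_nonneg (by linarith [hκ.2]) _) zero_le_one
          exact Real.rpow_le_one h0κ hκ.2 hp.le
      _ = (1 - κ) ^ (t - 1) := by ring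
  refine ⟨hI1, hI2, ?_, ?_, ?_⟩
  · apply intervalIntegral.integral_nonneg hε0.le
    intro κ hκ; exact hfnonneg κ hκ.1 (by linarith [hκ.2])
  · -- upper bound on [0, ε]
    have hub : ∀ κ ∈ Set.Icc (0:ℝ) ε, f κ ≤ 1 / (1 - ε) := by
      intro κ hκ
      have h1 : κ ^ (b - 1/2) ≤ 1 := Real.rpow_le_one hκ.1 (by linarith [hκ.2]) hp.le
      have h2 : (1 - κ) ^ (t - 1) ≤ (1 - ε) ^ (t - 1) :=
        Real.rpow_le_rpow_of_nonpos (by linarith) (by linarith [hκ.2]) (by linarith)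
      have h3 : (1 - ε) ^ (t - 1) ≤ (1 - ε) ^ (-1 : ℝ) :=
        Real.rpow_le_rpow_of_exponent_ge (by linarith) (by linarith) (by linarith)
      have h4 : (1 - ε) ^ (-1 : ℝ) = 1 / (1 - ε) := by
        rw [Real.rpow_neg_one]; ring
      have h5 : Real.exp (-κ * x^2 / 2) ≤ 1 :=
        Real.exp_le_one_iff.mpr (by nlinarith [sq_nonneg x, hκ.1])
      calc f κ ≤ 1 * ((1 - ε) ^ (-1:ℝ)) * 1 := by
            apply mul_le_mul _ h5 (Real.exp_pos _).le
              (mul_nonneg zero_le_one (Real.rpow_nonneg (by linarith) _))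
            exact mul_le_mul h1 (h2.trans h3) (Real.rpow_nonneg (by linarith [hκ.2]) _) zero_le_one
        _ = 1 / (1 - ε) := by rw [h4]; ring
    calc (∫ κ in (0:ℝ)..ε, f κ) ≤ ∫ κ in (0:ℝ)..ε, 1 / (1 - ε) := by
          apply intervalIntegral.integral_mono_on hε0.le hI1 (by simp) hub
      _ = ε / (1 - ε) := by simp; ring
  · -- lower bound on [ε, 1]
    have hgi : ∫ κ in ε..1, (1 - κ) ^ (t - 1) = (1 - ε) ^ t / t := by
      have h := intervalIntegral.integral_comp_sub_left (a := ε) (b := 1)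
        (fun u : ℝ => u ^ (t - 1)) 1
      simp only [sub_self] at h
      rw [h, integral_rpow (Or.inl (by linarith))]
      rw [Real.zero_rpow (by linarith : t - 1 + 1 ≠ 0)]
      rw [show t - 1 + 1 = t by ring]
      ring
    have hlb : ∀ κ ∈ Set.Icc ε 1,
        ε ^ (b - 1/2) * Real.exp (-x^2/2) * (1 - κ) ^ (t - 1) ≤ f κ := by
      intro κ hκ
      have h1 : ε ^ (b - 1/2) ≤ κ ^ (b - 1/2) := Real.rpow_le_rpow hε0.le hκ.1 hp.le
      have h2 : Real.exp (-x^2/2) ≤ Real.exp (-κ * x^2 / 2) := by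
        apply Real.exp_le_exp.mpr; nlinarith [sq_nonneg x, hκ.2]
      have h3 : (0:ℝ) ≤ (1 - κ) ^ (t - 1) := Real.rpow_nonneg (by linarith [hκ.2]) _
      calc ε ^ (b - 1/2) * Real.exp (-x^2/2) * (1 - κ) ^ (t - 1)
          ≤ κ ^ (b - 1/2) * Real.exp (-κ * x^2 / 2) * (1 - κ) ^ (t - 1) := by
            apply mul_le_mul _ le_rfl h3
              (mul_nonneg (Real.rpow_nonneg (hε0.le.trans hκ.1) _) (Real.exp_pos _).le)
            exact mul_le_mul h1 h2 (Real.exp_pos _).le (Real.rpow_nonneg (hε0.le.trans hκ.1) _)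
        _ = f κ := by ring
    calc ε ^ (b - 1/2) * Real.exp (-x^2/2) * ((1 - ε) ^ t / t)
        = ∫ κ in ε..1, ε ^ (b - 1/2) * Real.exp (-x^2/2) * (1 - κ) ^ (t - 1) := by
          rw [intervalIntegral.integral_const_mul, hgi]
      _ ≤ ∫ κ in ε..1, f κ :=
          intervalIntegral.integral_mono_on hε1.le (hg.const_mul _) hI2 hlb

/-- If aₙ → 0 then Pr(κ ≥ ε | x; aₙ) → 1 for fixed x. -/
theorem stmt_18 (ε b x : ℝ) (hε : ε ∈ Set.Ioo (0:ℝ) 1) (hb : b ∈ Set.Ioi (1/2 : ℝ))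
    (a : ℕ → ℝ) (ha : ∀ n, a n ∈ Set.Ioo (0:ℝ) 1) (ha0 : Tendsto a atTop (nhds 0)) :
    Tendsto (fun n =>
      (∫ κ in ε..1, κ ^ (b - 1/2) * (1 - κ) ^ (a n - 1) * Real.exp (-κ * x^2 / 2)) /
        (∫ κ in (0:ℝ)..1, κ ^ (b - 1/2) * (1 - κ) ^ (a n - 1) * Real.exp (-κ * x^2 / 2)))
      atTop (nhds 1) := by
  obtain ⟨hε0, hε1⟩ := hε
  rw [Set.mem_Ioi] at hb
  set A : ℕ → ℝ := fun n =>
    ∫ κ in (0:ℝ)..ε, κ ^ (b - 1/2) * (1 - κ) ^ (a n - 1) * Real.exp (-κ * x^2 / 2) with hA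
  set B : ℕ → ℝ := fun n =>
    ∫ κ in ε..1, κ ^ (b - 1/2) * (1 - κ) ^ (a n - 1) * Real.exp (-κ * x^2 / 2) with hB
  have key := fun n => aux18 ε b x (a n) hε0 hε1 hb (ha n).1 (ha n).2
  set c : ℝ := ε ^ (b - 1/2) * Real.exp (-x^2/2) with hc
  have hcpos : 0 < c := by
    have := Real.rpow_pos_of_pos hε0 (b - 1/2); positivity
  have hB2 : ∀ n, c * (1 - ε) / a n ≤ B n := by
    intro n
    have h1 : (1 - ε : ℝ) ≤ (1 - ε) ^ (a n) := by
      have := Real.rpow_le_rpow_of_exponent_ge (by linarith : (0:ℝ) < 1 - ε)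
        (by linarith) (ha n).2.le (y := 1) (z := a n)
      rwa [Real.rpow_one] at this
    calc c * (1 - ε) / a n = c * ((1 - ε) / a n) := by ring
      _ ≤ c * ((1 - ε) ^ (a n) / a n) := by
          have := (ha n).1
          gcongr
      _ ≤ B n := (key n).2.2.2.2
  have hBpos : ∀ n, 0 < B n := fun n =>
    lt_of_lt_of_le (div_pos (mul_pos hcpos (by linarith)) (ha n).1) (hB2 n)
  have hA0 : ∀ n, 0 ≤ A n := fun n => (key n).2.2.1
  have hAC : ∀ n, A n ≤ ε / (1 - ε) := fun n => (key n).2.2.2.1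
  -- A/B → 0
  have hq : Tendsto (fun n => A n / B n) atTop (nhds 0) := by
    apply squeeze_zero (fun n => div_nonneg (hA0 n) (hBpos n).le)
      (g := fun n => (ε / (1 - ε)) / (c * (1 - ε)) * a n)
    · intro n
      have hd : (0:ℝ) < c * (1 - ε) / a n :=
        div_pos (mul_pos hcpos (by linarith)) (ha n).1
      have h1 : A n / B n ≤ (ε / (1 - ε)) / (c * (1 - ε) / a n) :=
        div_le_div₀ (div_nonneg hε0.le (by linarith)) (hAC n) hd (hB2 n)
      have h2 : (ε / (1 - ε)) / (c * (1 - ε) / a n) = (ε / (1 - ε)) / (c * (1 - ε)) * a n := by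
        rw [div_div_eq_mul_div]; ring
      linarith [h1, h2 ▸ h1]
    · simpa using ha0.const_mul ((ε / (1 - ε)) / (c * (1 - ε)))
  have hlim : Tendsto (fun n => (1 + A n / B n)⁻¹) atTop (nhds 1) := by
    have := ((tendsto_const_nhds (x := (1:ℝ)) (f := atTop)).add hq).inv₀ (by norm_num)
    simpa using this
  apply hlim.congr
  intro n
  have hsplit : A n + B n
      = ∫ κ in (0:ℝ)..1, κ ^ (b - 1/2) * (1 - κ) ^ (a n - 1) * Real.exp (-κ * x^2 / 2) :=
    intervalIntegral.integral_add_adjacent_intervals (key n).1 (key n).2.1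
  rw [← hsplit]
  have hkey : ∀ (A B : ℝ), 0 ≤ A → 0 < B → (1 + A / B)⁻¹ = B / (A + B) := by
    intro A B hA hB
    have h1 : (0:ℝ) < A + B := by linarith
    have h2 : (0:ℝ) ≤ A / B := div_nonneg hA hB.le
    rw [inv_eq_one_div, div_eq_div_iff (by linarith : (1:ℝ) + A / B ≠ 0) h1.ne']
    field_simp
    ring
  exact hkey (A n) (B n) (hA0 n) (hBpos n)
end
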